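/- arXiv:1904.02753 — 3 statements merged into one kernel-verified Lean document; each statement's English description precedes it below -/
import Mathlib

section
/- The operators E_{i,j} = Σ_{c=1}^{k} x_{i,c} ∂_{j,c} and F_{a,b} = Σ_{p=1}^{m+n} x_{p,a} ∂_{p,b} on the bosonic-fermionic space V commute: E_{i,j} ∘ F_{a,b} = F_{a,b} ∘ E_{i,j} in End_ℂ(V) for all i,j ∈ {1,…,m+n} and all a,b ∈ {1,…,k}. -/
noncomputable section
open scoped TensorProduct
open scoped Classical
set_option maxHeartbeats 1000000
set_option synthInstance.maxHeartbeats 400000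

/-- The bosonic-fermionic space `V`: polynomials in the even variables `x_{i,a}` (`i < m`)
tensored with the exterior algebra on the odd generators `ξ_{j,a}`. -/
abbrev BF (m n k : ℕ) : Type :=
  MvPolynomial (Fin m × Fin k) ℂ ⊗[ℂ] ExteriorAlgebra ℂ ((Fin n × Fin k) → ℂ)

/-- The operator `x_{i,a}`: multiplication by the variable `x_{i,a}` (bosonic case `i < m`),
resp. left exterior multiplication by `ξ_{i,a}` (fermionic case `m ≤ i`). -/
def xOp (m n k : ℕ) (i : Fin (m + n)) (a : Fin k) : Module.End ℂ (BF m n k) :=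
  if h : (i : ℕ) < m then
    TensorProduct.map (LinearMap.mulLeft ℂ (MvPolynomial.X (⟨(i : ℕ), h⟩, a))) LinearMap.id
  else
    TensorProduct.map LinearMap.id
      (LinearMap.mulLeft ℂ (ExteriorAlgebra.ι ℂ
        (Pi.single (⟨(i : ℕ) - m, by have := i.isLt; omega⟩, a) (1 : ℂ))))

/-- The operator `∂_{i,a}`: partial derivative in `x_{i,a}` (bosonic case), resp. the
contraction (interior product) with the coordinate functional of `ξ_{i,a}` (fermionic case). -/
def dOp (m n k : ℕ) (i : Fin (m + n)) (a : Fin k) : Module.End ℂ (BF m n k) :=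
  if h : (i : ℕ) < m then
    TensorProduct.map ((MvPolynomial.pderiv (⟨(i : ℕ), h⟩, a)).toLinearMap) LinearMap.id
  else
    TensorProduct.map LinearMap.id
      (CliffordAlgebra.contractLeft (Q := (0 : QuadraticForm ℂ ((Fin n × Fin k) → ℂ)))
        (LinearMap.proj (⟨(i : ℕ) - m, by have := i.isLt; omega⟩, a)))

/- ### Auxiliary lemmas -/

section Aux

variable {R M N : Type*} [CommRing R] [AddCommGroup M] [AddCommGroup N] [Module R M] [Module R N]

lemma mapL_mul (f g : Module.End R M) :
    (TensorProduct.map f LinearMap.id : Module.End R (M ⊗[R] N)) * TensorProduct.map g LinearMap.id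
      = TensorProduct.map (f * g) LinearMap.id := by
  rw [Module.End.mul_eq_comp, Module.End.mul_eq_comp, ← TensorProduct.map_comp, LinearMap.id_comp]

lemma mapR_mul (f g : Module.End R N) :
    (TensorProduct.map (LinearMap.id : M →ₗ[R] M) f) * TensorProduct.map LinearMap.id g
      = TensorProduct.map LinearMap.id (f * g) := by
  rw [Module.End.mul_eq_comp, Module.End.mul_eq_comp, ← TensorProduct.map_comp, LinearMap.id_comp]

lemma mapLR (f : Module.End R M) (g : Module.End R N) :
    (TensorProduct.map f LinearMap.id) * TensorProduct.map (LinearMap.id) g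
      = TensorProduct.map (LinearMap.id) g * TensorProduct.map f LinearMap.id := by
  rw [Module.End.mul_eq_comp, Module.End.mul_eq_comp, ← TensorProduct.map_comp,
    ← TensorProduct.map_comp, LinearMap.id_comp, LinearMap.id_comp, LinearMap.comp_id,
    LinearMap.comp_id]

lemma pderiv_comm' {σ : Type*} (s t : σ) (p : MvPolynomial σ R) :
    MvPolynomial.pderiv s (MvPolynomial.pderiv t p) =
      MvPolynomial.pderiv t (MvPolynomial.pderiv s p) := by
  induction p using MvPolynomial.induction_on with
  | C => simp
  | add p q hp hq => simp [hp, hq]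
  | mul_X p u hp =>
    rcases eq_or_ne u t with rfl | ht <;> rcases eq_or_ne u s with rfl | hs <;>
      simp [MvPolynomial.pderiv_mul, MvPolynomial.pderiv_X_self, MvPolynomial.pderiv_X_of_ne,
        hp, *] <;> ring

lemma mulLeft_neg' {A : Type*} [Ring A] [Algebra R A] (x : A) :
    LinearMap.mulLeft R (-x) = - LinearMap.mulLeft R x := by
  ext y; simp [neg_mul]

end Aux

/-- The sign `(-1)^{|i||p|}`. -/
def sgn (m n : ℕ) (i p : Fin (m + n)) : ℂ := if m ≤ (i : ℕ) ∧ m ≤ (p : ℕ) then -1 else 1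

lemma sgn_comm (m n : ℕ) (i p : Fin (m + n)) : sgn m n i p = sgn m n p i := by
  simp [sgn, and_comm]

lemma sgn_mul_self (m n : ℕ) (i p : Fin (m + n)) : sgn m n i p * sgn m n i p = 1 := by
  unfold sgn; split_ifs <;> norm_num

/-- Commutation of the `x` operators. -/
lemma xx (m n k : ℕ) (i p : Fin (m + n)) (c a : Fin k) :
    xOp m n k i c * xOp m n k p a = sgn m n i p • (xOp m n k p a * xOp m n k i c) := by
  unfold xOp sgn
  by_cases hi : (i : ℕ) < m <;> by_cases hp : (p : ℕ) < m
  · rw [dif_pos hi, dif_pos hp, if_neg (by omega), one_smul, mapL_mul, mapL_mul]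
    congr 1
    rw [Module.End.mul_eq_comp, Module.End.mul_eq_comp, ← LinearMap.mulLeft_mul,
      ← LinearMap.mulLeft_mul, mul_comm]
  · rw [dif_pos hi, dif_neg hp, if_neg (by omega), one_smul, mapLR]
  · rw [dif_neg hi, dif_pos hp, if_neg (by omega), one_smul, ← mapLR]
  · rw [dif_neg hi, dif_neg hp, if_pos ⟨by omega, by omega⟩, mapR_mul, mapR_mul,
      ← TensorProduct.map_smul_right]
    congr 1
    rw [Module.End.mul_eq_comp, Module.End.mul_eq_comp, ← LinearMap.mulLeft_mul,
      ← LinearMap.mulLeft_mul]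
    rw [eq_neg_of_add_eq_zero_left (ExteriorAlgebra.ι_add_mul_swap _ _), mulLeft_neg']
    exact (neg_one_smul ℂ _).symm

/-- Commutation of the `∂` operators. -/
lemma dd (m n k : ℕ) (i p : Fin (m + n)) (c a : Fin k) :
    dOp m n k i c * dOp m n k p a = sgn m n i p • (dOp m n k p a * dOp m n k i c) := by
  unfold dOp sgn
  by_cases hi : (i : ℕ) < m <;> by_cases hp : (p : ℕ) < m
  · rw [dif_pos hi, dif_pos hp, if_neg (by omega), one_smul, mapL_mul, mapL_mul]
    refine congrArg (fun f => TensorProduct.map f LinearMap.id) ?_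
    exact LinearMap.ext fun q => pderiv_comm' _ _ q
  · rw [dif_pos hi, dif_neg hp, if_neg (by omega), one_smul, mapLR]
  · rw [dif_neg hi, dif_pos hp, if_neg (by omega), one_smul, ← mapLR]
  · rw [dif_neg hi, dif_neg hp, if_pos ⟨by omega, by omega⟩, mapR_mul, mapR_mul,
      ← TensorProduct.map_smul_right]
    congr 1
    refine LinearMap.ext fun x => ?_
    simpa using CliffordAlgebra.contractLeft_comm _ _ x

/-- The fundamental commutation relation `∂ x = ± x ∂ + δ`. -/
lemma dx (m n k : ℕ) (j p : Fin (m + n)) (c a : Fin k) :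
    dOp m n k j c * xOp m n k p a =
      sgn m n j p • (xOp m n k p a * dOp m n k j c) +
        (if p = j ∧ a = c then (1 : ℂ) else 0) • 1 := by
  unfold dOp xOp sgn
  by_cases hj : (j : ℕ) < m <;> by_cases hp : (p : ℕ) < m
  · -- both bosonic
    rw [dif_pos hj, dif_pos hp, if_neg (by omega), one_smul, mapL_mul, mapL_mul]
    have h1 : (1 : Module.End ℂ (BF m n k)) =
        TensorProduct.map (LinearMap.id) LinearMap.id := (TensorProduct.map_id).symm
    rw [h1, ← TensorProduct.map_smul_left, ← TensorProduct.map_add_left]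
    congr 1
    refine LinearMap.ext fun q => ?_
    have hiff : ((⟨(p : ℕ), hp⟩, a) : Fin m × Fin k) = (⟨(j : ℕ), hj⟩, c) ↔ p = j ∧ a = c := by
      constructor
      · intro h
        obtain ⟨h1, h2⟩ := Prod.ext_iff.1 h
        have h3 : (p : ℕ) = (j : ℕ) := by simpa using congrArg Fin.val h1
        exact ⟨Fin.ext h3, h2⟩
      · rintro ⟨h1, h2⟩
        have h3 : (p : ℕ) = (j : ℕ) := congrArg Fin.val h1
        subst h2; congr 1; exact Fin.ext h3
    by_cases hd : p = j ∧ a = c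
    · rw [if_pos hd]
      have heq : ((⟨(p : ℕ), hp⟩, a) : Fin m × Fin k) = (⟨(j : ℕ), hj⟩, c) := hiff.2 hd
      simp only [Module.End.mul_apply, LinearMap.add_apply, LinearMap.smul_apply,
        Module.End.one_apply, LinearMap.mulLeft_apply, LinearMap.coe_mk,
        Derivation.coeFn_coe, LinearMap.id_coe, id_eq, one_smul]
      rw [heq, MvPolynomial.pderiv_mul, MvPolynomial.pderiv_X_self]
      ring
    · rw [if_neg hd]
      have hne : ((⟨(p : ℕ), hp⟩, a) : Fin m × Fin k) ≠ (⟨(j : ℕ), hj⟩, c) :=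
        fun h => hd (hiff.1 h)
      simp only [Module.End.mul_apply, LinearMap.add_apply, LinearMap.smul_apply,
        Module.End.one_apply, LinearMap.mulLeft_apply, LinearMap.coe_mk,
        Derivation.coeFn_coe, LinearMap.id_coe, id_eq, zero_smul, add_zero]
      rw [MvPolynomial.pderiv_mul, MvPolynomial.pderiv_X_of_ne hne]
      ring
  · -- j bosonic, p fermionic
    rw [dif_pos hj, dif_neg hp, if_neg (by omega), one_smul,
      if_neg (by rintro ⟨rfl, -⟩; omega), zero_smul, add_zero, ← mapLR]
  · -- j fermionic, p bosonic
    rw [dif_neg hj, dif_pos hp, if_neg (by omega), one_smul,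
      if_neg (by rintro ⟨rfl, -⟩; omega), zero_smul, add_zero, mapLR]
  · -- both fermionic
    rw [dif_neg hj, dif_neg hp, if_pos ⟨by omega, by omega⟩, mapR_mul, mapR_mul]
    have h1 : (1 : Module.End ℂ (BF m n k)) =
        TensorProduct.map (LinearMap.id) LinearMap.id := (TensorProduct.map_id).symm
    rw [h1, ← TensorProduct.map_smul_right, ← TensorProduct.map_smul_right,
      ← TensorProduct.map_add_right]
    congr 1
    refine LinearMap.ext fun x => ?_
    have key := CliffordAlgebra.contractLeft_ι_mul
      (Q := (0 : QuadraticForm ℂ ((Fin n × Fin k) → ℂ)))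
      (d := LinearMap.proj (⟨(j : ℕ) - m, by have := j.isLt; omega⟩, c))
      (Pi.single (⟨(p : ℕ) - m, by have := p.isLt; omega⟩, a) (1 : ℂ)) x
    have hval : (LinearMap.proj (R := ℂ) (φ := fun _ : Fin n × Fin k => ℂ)
        (⟨(j : ℕ) - m, by have := j.isLt; omega⟩, c))
          (Pi.single (⟨(p : ℕ) - m, by have := p.isLt; omega⟩, a) (1 : ℂ)) =
        if p = j ∧ a = c then (1 : ℂ) else 0 := by
      have hiff : ((⟨(j : ℕ) - m, by have := j.isLt; omega⟩, c) : Fin n × Fin k) =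
          (⟨(p : ℕ) - m, by have := p.isLt; omega⟩, a) ↔ p = j ∧ a = c := by
        constructor
        · intro h
          obtain ⟨h1, h2⟩ := Prod.ext_iff.1 h
          have h3 : (j : ℕ) - m = (p : ℕ) - m := by simpa using congrArg Fin.val h1
          exact ⟨Fin.ext (by omega), h2.symm⟩
        · rintro ⟨h1, rfl⟩
          have h3 : (p : ℕ) = (j : ℕ) := congrArg Fin.val h1
          refine Prod.ext ?_ rfl
          exact Fin.ext (by simp; omega)
      rw [LinearMap.proj_apply, Pi.single_apply]
      by_cases h : p = j ∧ a = c
      · rw [if_pos (hiff.2 h), if_pos h]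
      · rw [if_neg (fun hh => h (hiff.1 hh)), if_neg h]
    simp only [LinearMap.add_apply, LinearMap.smul_apply, Module.End.mul_apply,
      LinearMap.id_apply, LinearMap.mulLeft_apply]
    rw [key, hval]
    simp only [neg_smul, one_smul, smul_smul, mul_one, neg_one_smul]
    abel

/-- The per-term commutator identity. -/
lemma keyTerm (m n k : ℕ) (i j p : Fin (m + n)) (a b c : Fin k) :
    (xOp m n k i c * dOp m n k j c) * (xOp m n k p a * dOp m n k p b) =
      (xOp m n k p a * dOp m n k p b) * (xOp m n k i c * dOp m n k j c) +
        (if p = j ∧ a = c then (1 : ℂ) else 0) • (xOp m n k i c * dOp m n k p b) -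
        (if i = p ∧ c = b then (1 : ℂ) else 0) • (xOp m n k p a * dOp m n k j c) := by
  set X1 := xOp m n k i c
  set D1 := dOp m n k j c
  set X2 := xOp m n k p a
  set D2 := dOp m n k p b
  have h1 : D1 * X2 = sgn m n j p • (X2 * D1) + (if p = j ∧ a = c then (1 : ℂ) else 0) • 1 :=
    dx m n k j p c a
  have h2 : D2 * X1 = sgn m n p i • (X1 * D2) + (if i = p ∧ c = b then (1 : ℂ) else 0) • 1 :=
    dx m n k p i b c
  have h3 : X1 * X2 = sgn m n i p • (X2 * X1) := xx m n k i p c a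
  have h4 : D1 * D2 = sgn m n j p • (D2 * D1) := dd m n k j p c b
  have lhs : X1 * D1 * (X2 * D2) =
      sgn m n i p • (X2 * (X1 * (D2 * D1))) +
        (if p = j ∧ a = c then (1 : ℂ) else 0) • (X1 * D2) := by
    calc X1 * D1 * (X2 * D2) = X1 * (D1 * X2) * D2 := by
          rw [mul_assoc X1, ← mul_assoc D1, ← mul_assoc, ← mul_assoc]
      _ = sgn m n j p • (X1 * X2 * (D1 * D2)) +
            (if p = j ∧ a = c then (1 : ℂ) else 0) • (X1 * D2) := by
          rw [h1]; simp only [mul_add, add_mul, mul_smul_comm, smul_mul_assoc, mul_one, one_mul]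
          rw [← mul_assoc X1 X2 D1, mul_assoc (X1 * X2)]
      _ = _ := by
          rw [h3, h4, smul_mul_assoc, mul_smul_comm, smul_smul, smul_smul]
          rw [show sgn m n j p * sgn m n i p * sgn m n j p = sgn m n i p by
            rw [mul_comm (sgn m n j p) (sgn m n i p), mul_assoc, sgn_mul_self, mul_one]]
          rw [mul_assoc]
  have rhs : X2 * D2 * (X1 * D1) =
      sgn m n i p • (X2 * (X1 * (D2 * D1))) +
        (if i = p ∧ c = b then (1 : ℂ) else 0) • (X2 * D1) := by
    calc X2 * D2 * (X1 * D1) = X2 * (D2 * X1) * D1 := by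
          rw [mul_assoc X2, ← mul_assoc D2, ← mul_assoc, ← mul_assoc]
      _ = sgn m n p i • (X2 * (X1 * (D2 * D1))) +
            (if i = p ∧ c = b then (1 : ℂ) else 0) • (X2 * D1) := by
          rw [h2]; simp only [mul_add, add_mul, mul_smul_comm, smul_mul_assoc, mul_one, one_mul]
          rw [← mul_assoc X2 X1 D2, mul_assoc (X2 * X1), mul_assoc X2]
      _ = _ := by rw [sgn_comm m n p i]
  rw [lhs, rhs]
  abel

lemma sum_helper {V : Type*} [AddCommGroup V] {ι κ : Type*} [Fintype ι] [Fintype κ]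
    (f g h e : ι → κ → V) (h1 : ∑ c : ι, ∑ p : κ, g c p = ∑ c : ι, ∑ p : κ, h c p)
    (he : ∀ c p, f c p = e c p + g c p - h c p) :
    ∑ c : ι, ∑ p : κ, f c p = ∑ c : ι, ∑ p : κ, e c p := by
  have : ∑ c : ι, ∑ p : κ, f c p =
      ∑ c : ι, ∑ p : κ, (e c p + g c p - h c p) :=
    Finset.sum_congr rfl fun c _ => Finset.sum_congr rfl fun p _ => he c p
  rw [this]
  simp only [Finset.sum_sub_distrib, Finset.sum_add_distrib, h1]
  abel

/-- **Statement 7.**  The operators `E_{i,j} = Σ_c x_{i,c} ∂_{j,c}` and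
`F_{a,b} = Σ_p x_{p,a} ∂_{p,b}` on the bosonic-fermionic space `V` commute. -/
theorem statement7 (m n k : ℕ) (hk : 1 ≤ k) (i j : Fin (m + n)) (a b : Fin k) :
    (∑ c : Fin k, xOp m n k i c * dOp m n k j c) *
        (∑ p : Fin (m + n), xOp m n k p a * dOp m n k p b) =
      (∑ p : Fin (m + n), xOp m n k p a * dOp m n k p b) *
        (∑ c : Fin k, xOp m n k i c * dOp m n k j c) := by
  rw [Finset.sum_mul_sum, Finset.sum_mul_sum]
  rw [Finset.sum_comm (s := Finset.univ) (t := Finset.univ)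
    (f := fun p c => (xOp m n k p a * dOp m n k p b) * (xOp m n k i c * dOp m n k j c))]
  refine sum_helper (V := Module.End ℂ (BF m n k)) _ _ _ _ ?_ (fun c p => by exact keyTerm m n k i j p a b c)
  have hsum1 : ∑ c : Fin k, ∑ p : Fin (m + n),
      (if p = j ∧ a = c then (1 : ℂ) else 0) • (xOp m n k i c * dOp m n k p b) =
      xOp m n k i a * dOp m n k j b := by
    simp only [ite_and]
    rw [Finset.sum_comm]
    rw [Finset.sum_eq_single j]
    · rw [Finset.sum_eq_single a]
      · simp
      · intro c _ hc; simp [Ne.symm hc]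
      · simp
    · intro p _ hp; simp [hp]
    · simp
  have hsum2 : ∑ c : Fin k, ∑ p : Fin (m + n),
      (if i = p ∧ c = b then (1 : ℂ) else 0) • (xOp m n k p a * dOp m n k j c) =
      xOp m n k i a * dOp m n k j b := by
    simp only [ite_and]
    rw [Finset.sum_eq_single b]
    · rw [Finset.sum_eq_single i]
      · simp
      · intro p _ hp; simp [Ne.symm hp]
      · simp
    · intro c _ hc; simp [hc]
    · simp
  rw [hsum1, hsum2]
end
end

section
/- Let A(w) be an affine Manin matrix of parity s over a superalgebra 𝒜. Then A(w) has a two-sided inverse A(w)^{−1} with entries in 𝒜[[w]], and A(w)^{−1} is again an affine Manin matrix of parity s. -/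
noncomputable section
open scoped Classical

/-- A superalgebra structure on an associative unital `ℂ`-algebra `A`:
a `ℤ/2`-grading `A = A₀ ⊕ A₁` compatible with the multiplication. -/
structure SuperAlg (A : Type*) [Ring A] [Algebra ℂ A] where
  /-- The homogeneous components. -/
  g : ZMod 2 → Submodule ℂ A
  one_mem : (1 : A) ∈ g 0
  mul_mem : ∀ {d e : ZMod 2} {a b : A}, a ∈ g d → b ∈ g e → a * b ∈ g (d + e)
  decomp : ∀ a : A, ∃ a0 ∈ g 0, ∃ a1 ∈ g 1, a = a0 + a1
  disjoint : ∀ a : A, a ∈ g 0 → a ∈ g 1 → a = 0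

/-- `(−1)^d` for `d : ℤ/2`. -/
def sgnZ (d : ZMod 2) : ℤ := if d = 0 then 1 else -1

/-- A parity sequence: each `s i ∈ {1,−1}`. -/
def IsParitySeq {N : ℕ} (s : Fin N → ℤ) : Prop := ∀ i, s i = 1 ∨ s i = -1

/-- The `ℤ/2`-degree `ī^s` attached to a parity sequence. -/
def pdeg {N : ℕ} (s : Fin N → ℤ) (i : Fin N) : ZMod 2 := if s i = 1 then 0 else 1

/-- The supercommutator `[x,y] = xy − (−1)^{x̄·ȳ} yx` of elements of (declared) degrees
`dx`, `dy`. -/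
def scomm {B : Type*} [Ring B] (dx dy : ZMod 2) (x y : B) : B :=
  x * y - sgnZ (dx * dy) • (y * x)

/-- A matrix is of parity `s` if its `(i,j)` entry is homogeneous of degree `ī^s + j̄^s`
(with respect to the grading `g`). -/
def IsMatParity {B : Type*} [Ring B] [Algebra ℂ B] (g : ZMod 2 → Submodule ℂ B) {N : ℕ}
    (s : Fin N → ℤ) (M : Matrix (Fin N) (Fin N) B) : Prop :=
  ∀ i j, M i j ∈ g (pdeg s i + pdeg s j)

/-- A Manin matrix of parity `s`: a matrix of parity `s` whose entries satisfy
`[a_{i,j},a_{p,q}] = (−1)^{ī^s j̄^s + ī^s p̄^s + j̄^s p̄^s} [a_{p,j},a_{i,q}]`. -/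
def IsManin {B : Type*} [Ring B] [Algebra ℂ B] (g : ZMod 2 → Submodule ℂ B) {N : ℕ}
    (s : Fin N → ℤ) (M : Matrix (Fin N) (Fin N) B) : Prop :=
  IsMatParity g s M ∧
    ∀ i j p q, scomm (pdeg s i + pdeg s j) (pdeg s p + pdeg s q) (M i j) (M p q) =
      sgnZ (pdeg s i * pdeg s j + pdeg s i * pdeg s p + pdeg s j * pdeg s p) •
        scomm (pdeg s p + pdeg s j) (pdeg s i + pdeg s q) (M p j) (M i q)

/-- The grading on `𝒜[[w]]` induced by a grading on `𝒜` (the variable `w` is even):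
a power series is homogeneous of degree `d` iff all its coefficients are. -/
def gPS {A : Type*} [Ring A] [Algebra ℂ A] (g : ZMod 2 → Submodule ℂ A) (d : ZMod 2) :
    Submodule ℂ (PowerSeries A) where
  carrier := {f | ∀ t : ℕ, PowerSeries.coeff t f ∈ g d}
  add_mem' := by
    intro f h hf hh t
    rw [map_add]
    exact (g d).add_mem (hf t) (hh t)
  zero_mem' := by
    intro t
    rw [map_zero]
    exact (g d).zero_mem
  smul_mem' := by
    intro c f hf t
    have : PowerSeries.coeff t (c • f) = c • PowerSeries.coeff t f := rfl
    rw [this]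
    exact (g d).smul_mem c (hf t)

/-- An affine matrix over `𝒜`: a matrix with entries in `𝒜[[w]]` whose constant term is the
identity matrix. -/
def IsAffine {A : Type*} [Ring A] {N : ℕ} (M : Matrix (Fin N) (Fin N) (PowerSeries A)) :
    Prop :=
  ∀ i j, PowerSeries.coeff 0 (M i j) = if i = j then 1 else 0

/-- The leading principal `(i+1) × (i+1)` submatrix. -/
def leadSub {R : Type*} [Ring R] {N : ℕ} (M : Matrix (Fin N) (Fin N) R) (i : Fin N) :
    Matrix (Fin ((i : ℕ) + 1)) (Fin ((i : ℕ) + 1)) R :=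
  M.submatrix (Fin.castLE i.isLt) (Fin.castLE i.isLt)

/-- The `(i+1)`-st principal quasi-minor `d_{i+1}(M)`: the two-sided inverse of the last
diagonal entry of the two-sided inverse of the leading principal `(i+1) × (i+1)` submatrix
(`Ring.inverse` is the genuine two-sided inverse whenever one exists, and junk `0` otherwise). -/
def dQM {R : Type*} [Ring R] {N : ℕ} (M : Matrix (Fin N) (Fin N) R) (i : Fin N) : R :=
  Ring.inverse ((Ring.inverse (leadSub M i)) (Fin.last (i : ℕ)) (Fin.last (i : ℕ)))

/-- `x^e` for `e ∈ {1,−1}`: `x` itself for `e = 1` and the two-sided inverse for `e = −1`. -/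
def pexp {R : Type*} [Ring R] (x : R) (e : ℤ) : R := if e = 1 then x else Ring.inverse x

/-- Ordered product `f 0 * f 1 * ⋯ * f (N-1)` in a possibly noncommutative ring. -/
def listProd {R : Type*} [Ring R] {N : ℕ} (f : Fin N → R) : R :=
  ((List.finRange N).map f).prod

/-- The Berezinian of parity `s`: `Ber^s M = d_1(M)^{s_1} ⋯ d_N(M)^{s_N}`. -/
def berPar {R : Type*} [Ring R] {N : ℕ} (s : Fin N → ℤ) (M : Matrix (Fin N) (Fin N) R) : R :=
  listProd fun i => pexp (dQM M i) (s i)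


/-! ### Auxiliary machinery for the proof -/

section Aux

open PowerSeries

variable {A : Type*} [Ring A] {ι : Type*} [Fintype ι] [DecidableEq ι]

/-- Matrices over power series are power series of matrices. -/
def matPS : Matrix ι ι (PowerSeries A) ≃+* PowerSeries (Matrix ι ι A) where
  toFun f := PowerSeries.mk fun t => Matrix.of fun i j => PowerSeries.coeff t (f i j)
  invFun F := Matrix.of fun i j => PowerSeries.mk fun t => PowerSeries.coeff t F i j
  left_inv f := by
    ext i j
    simp
  right_inv F := by
    ext t
    simp
  map_mul' f g := by
    ext t i j
    rw [PowerSeries.coeff_mul]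
    simp only [PowerSeries.coeff_mk, Matrix.of_apply, Matrix.mul_apply, map_sum,
      PowerSeries.coeff_mul, Matrix.sum_apply]
    rw [Finset.sum_comm]
  map_add' f g := by
    ext t i j
    simp [Matrix.add_apply]

/-- A matrix of power series whose constant term is the identity is invertible. -/
theorem isUnit_of_coeff_zero_one (X : Matrix ι ι (PowerSeries A))
    (h : ∀ i j, PowerSeries.coeff 0 (X i j) = if i = j then 1 else 0) : IsUnit X := by
  have h1 : IsUnit (matPS X) := by
    rw [PowerSeries.isUnit_iff_constantCoeff]
    have : PowerSeries.constantCoeff (matPS X) = 1 := by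
      ext i j
      rw [← PowerSeries.coeff_zero_eq_constantCoeff_apply]
      simpa [matPS, Matrix.one_apply] using h i j
    rw [this]
    exact isUnit_one
  have := h1.map (matPS (A := A) (ι := ι)).symm.toRingHom
  simpa using this

end Aux

section Tensor

variable {T : Type*} [Ring T] {N : ℕ}

/-- The sign `(−1)^x` as a ring element. -/
def sgc (T : Type*) [Ring T] (x : ZMod 2) : T := ((sgnZ x : ℤ) : T)

lemma sgc_mul_self (x : ZMod 2) : sgc T x * sgc T x = 1 := by
  rw [sgc, ← Int.cast_mul]
  have : sgnZ x * sgnZ x = 1 := by unfold sgnZ; split_ifs <;> norm_num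
  rw [this, Int.cast_one]

lemma sgc_mul (x y : ZMod 2) : sgc T x * sgc T y = sgc T (x + y) := by
  rw [sgc, sgc, sgc, ← Int.cast_mul]
  congr 1
  revert x y; decide

lemma sgc_zero : sgc T 0 = 1 := by norm_num [sgc, sgnZ]

lemma sgc_comm (x : ZMod 2) (t : T) : sgc T x * t = t * sgc T x :=
  (Int.cast_commute _ t).eq

variable (d : Fin N → ZMod 2)

/-- The super permutation operator. -/
def Pmat : Matrix (Fin N × Fin N) (Fin N × Fin N) T :=
  fun x y => if y.1 = x.2 ∧ y.2 = x.1 then sgc T (d x.1 * d x.2) else 0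

/-- `X ⊗ 1`. -/
def Lone (X : Matrix (Fin N) (Fin N) T) : Matrix (Fin N × Fin N) (Fin N × Fin N) T :=
  fun x y => if y.2 = x.2 then X x.1 y.1 else 0

/-- `1 ⊗ X` (with super signs). -/
def Ltwo (X : Matrix (Fin N) (Fin N) T) : Matrix (Fin N × Fin N) (Fin N × Fin N) T :=
  fun x y => if y.1 = x.1 then sgc T ((d x.2 + d y.2) * d x.1) * X x.2 y.2 else 0

lemma Pmat_mul_Pmat : (Pmat d : Matrix (Fin N × Fin N) (Fin N × Fin N) T) * Pmat d = 1 := by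
  ext ⟨i, j⟩ ⟨k, l⟩
  rw [Matrix.mul_apply]
  rw [Finset.sum_eq_single ((j, i) : Fin N × Fin N)]
  · simp only [Pmat, Matrix.one_apply, Prod.mk.injEq]
    rw [if_pos ⟨trivial, trivial⟩]
    by_cases h : k = i ∧ l = j
    · obtain ⟨rfl, rfl⟩ := h
      rw [if_pos ⟨rfl, rfl⟩, if_pos ⟨rfl, rfl⟩, mul_comm (d _) (d _), sgc_mul_self]
    · rw [if_neg h, mul_zero, if_neg (fun hc => h ⟨hc.1.symm, hc.2.symm⟩)]
  · intro b _ hb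
    have : ¬(b.1 = j ∧ b.2 = i) := by
      intro hc; exact hb (Prod.ext hc.1 hc.2)
    simp [Pmat, this]
  · simp

lemma Lone_one : Lone (1 : Matrix (Fin N) (Fin N) T)
    = (1 : Matrix (Fin N × Fin N) (Fin N × Fin N) T) := by
  ext ⟨i, j⟩ ⟨k, l⟩
  simp only [Lone, Matrix.one_apply, Prod.mk.injEq]
  by_cases h1 : l = j
  · subst h1
    by_cases h2 : i = k <;> simp [h2]
  · have h1' : ¬ j = l := fun h => h1 h.symm
    simp [h1, h1']

lemma Lone_mul (X Y : Matrix (Fin N) (Fin N) T) :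
    Lone X * Lone Y = (Lone (X * Y) : Matrix (Fin N × Fin N) (Fin N × Fin N) T) := by
  ext ⟨i, j⟩ ⟨k, l⟩
  rw [Matrix.mul_apply]
  rw [Fintype.sum_prod_type]
  simp only [Lone, ite_mul, zero_mul, mul_ite, mul_zero]
  simp [Finset.sum_ite_eq', Matrix.mul_apply]

lemma zmod2_cancel : ∀ a b c e : ZMod 2, (a + b) * c + (b + e) * c = (a + e) * c := by
  decide

lemma Ltwo_one : Ltwo d (1 : Matrix (Fin N) (Fin N) T)
    = (1 : Matrix (Fin N × Fin N) (Fin N × Fin N) T) := by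
  ext ⟨i, j⟩ ⟨k, l⟩
  simp only [Ltwo, Matrix.one_apply, Prod.mk.injEq]
  by_cases h1 : k = i
  · subst h1
    by_cases h2 : j = l
    · subst h2
      simp [sgc_zero, CharTwo.add_self_eq_zero]
    · simp [h2, fun h : l = j => h2 h.symm]
  · simp only [h1, if_false]
    rw [if_neg (fun hc => h1 hc.1.symm)]

lemma sgc_shuffle (x y : ZMod 2) (u v : T) :
    (sgc T x * u) * (sgc T y * v) = sgc T (x + y) * (u * v) := by
  rw [← sgc_mul]
  rw [mul_assoc, ← mul_assoc u (sgc T y) v, ← sgc_comm y u, mul_assoc, ← mul_assoc]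

lemma Ltwo_mul (X Y : Matrix (Fin N) (Fin N) T) :
    Ltwo d X * Ltwo d Y = Ltwo d (X * Y) := by
  ext ⟨i, j⟩ ⟨k, l⟩
  rw [Matrix.mul_apply, Fintype.sum_prod_type]
  simp only [Ltwo, ite_mul, zero_mul, mul_ite, mul_zero]
  rw [Finset.sum_eq_single i (fun a _ ha => by simp [ha]) (by simp)]
  by_cases hk : k = i
  · subst hk
    simp only [if_pos rfl]
    rw [Matrix.mul_apply, Finset.mul_sum]
    refine Finset.sum_congr rfl fun b _ => ?_
    rw [sgc_shuffle, zmod2_cancel]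
    simp
  · simp [hk]

lemma zmod2_cancel2 : ∀ a b c : ZMod 2, a * b + c * a = (b + c) * a := by decide

lemma sgc_shuffle' (x y : ZMod 2) (u : T) :
    (sgc T x * u) * sgc T y = sgc T (x + y) * u := by
  rw [mul_assoc, ← sgc_comm, ← mul_assoc, sgc_mul]

lemma sgc_shuffle'' (y : ZMod 2) (u v : T) :
    u * (sgc T y * v) = sgc T y * (u * v) := by
  rw [← mul_assoc, ← sgc_comm, mul_assoc]

lemma conjP (X : Matrix (Fin N) (Fin N) T) :
    Pmat d * Lone X * Pmat d = Ltwo d X := by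
  ext ⟨i, j⟩ ⟨k, l⟩
  rw [Matrix.mul_apply]
  rw [Finset.sum_eq_single ((l, k) : Fin N × Fin N)
    (fun z _ hz => by
      have : ¬(k = z.2 ∧ l = z.1) := fun hc => hz (Prod.ext hc.2.symm hc.1.symm)
      simp [Pmat, this]) (by simp)]
  rw [Matrix.mul_apply]
  rw [Finset.sum_eq_single ((j, i) : Fin N × Fin N)
    (fun z _ hz => by
      have : ¬(z.1 = j ∧ z.2 = i) := fun hc => hz (Prod.ext hc.1 hc.2)
      simp [Pmat, this]) (by simp)]
  simp only [Pmat, Lone, Ltwo, and_self, if_true]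
  by_cases hk : k = i
  · subst hk
    rw [if_pos rfl, if_pos rfl, sgc_shuffle', zmod2_cancel2]
  · simp [hk]

lemma Tentry (X : Matrix (Fin N) (Fin N) T) (i j k l : Fin N) :
    (Lone X * Ltwo d X) (i, j) (k, l) = sgc T ((d j + d l) * d k) * (X i k * X j l) := by
  rw [Matrix.mul_apply]
  rw [Finset.sum_eq_single ((k, j) : Fin N × Fin N)
    (fun z _ hz => by
      by_cases h2 : z.2 = j
      · have h1 : ¬(k = z.1) := fun hc => hz (Prod.ext hc.symm h2)
        simp [Lone, Ltwo, h1]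
      · simp [Lone, Ltwo, h2]) (by simp)]
  simp only [Lone, Ltwo, if_true]
  rw [sgc_shuffle'']

lemma Pl (S : Matrix (Fin N × Fin N) (Fin N × Fin N) T) (i p : Fin N) (y : Fin N × Fin N) :
    ((Pmat d : Matrix (Fin N × Fin N) (Fin N × Fin N) T) * S) (i, p) y
      = sgc T (d i * d p) * S (p, i) y := by
  rw [Matrix.mul_apply]
  rw [Finset.sum_eq_single ((p, i) : Fin N × Fin N)
    (fun z _ hz => by
      have : ¬(z.1 = p ∧ z.2 = i) := fun hc => hz (Prod.ext hc.1 hc.2)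
      simp [Pmat, this]) (by simp)]
  simp [Pmat]

lemma Pr (S : Matrix (Fin N × Fin N) (Fin N × Fin N) T) (x : Fin N × Fin N) (j q : Fin N) :
    (S * (Pmat d : Matrix (Fin N × Fin N) (Fin N × Fin N) T)) x (j, q)
      = S x (q, j) * sgc T (d q * d j) := by
  rw [Matrix.mul_apply]
  rw [Finset.sum_eq_single ((q, j) : Fin N × Fin N)
    (fun z _ hz => by
      have : ¬(j = z.2 ∧ q = z.1) := fun hc => hz (Prod.ext hc.2.symm hc.1.symm)
      simp [Pmat, this]) (by simp)]
  simp [Pmat]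

/-- The sandwich `(1 − P) S (1 + P)`. -/
def sandwich {n : Type*} [Fintype n] [DecidableEq n] (P S : Matrix n n T) : Matrix n n T :=
  (1 - P) * S * (1 + P)

lemma entry_LR (S : Matrix (Fin N × Fin N) (Fin N × Fin N) T) (i p j q : Fin N) :
    sandwich (Pmat d) S (i, p) (j, q) =
      (S (i, p) (j, q) - sgc T (d i * d p) * S (p, i) (j, q))
      + (S (i, p) (q, j) - sgc T (d i * d p) * S (p, i) (q, j)) * sgc T (d q * d j) := by
  have h1 : sandwich (Pmat d) S
      = (S - Pmat d * S) + (S - Pmat d * S) * Pmat (T := T) d := by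
    unfold sandwich
    rw [sub_mul, Matrix.one_mul, mul_add, Matrix.mul_one]
  rw [h1, Matrix.add_apply, Matrix.sub_apply, Pl, Pr, Matrix.sub_apply, Pl]

lemma scomm_tensor_entry (X : Matrix (Fin N) (Fin N) T) (i p j q : Fin N) :
    sandwich (Pmat d) (Lone X * Ltwo d X) (i, p) (j, q)
    = sgc T ((d p + d q) * d j) *
        (scomm (d i + d j) (d p + d q) (X i j) (X p q)
          - sgnZ (d i * d j + d i * d p + d j * d p) •
            scomm (d p + d j) (d i + d q) (X p j) (X i q)) := by
  rw [entry_LR, Tentry, Tentry, Tentry, Tentry]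
  generalize X i j = x
  generalize X p q = y
  generalize X p j = z
  generalize X i q = w
  generalize d i = a
  generalize d p = b
  generalize d j = c
  generalize d q = e
  have hZ : ∀ v : ZMod 2, v = 0 ∨ v = 1 := by decide
  rcases hZ a with rfl | rfl <;> rcases hZ b with rfl | rfl <;>
    rcases hZ c with rfl | rfl <;> rcases hZ e with rfl | rfl <;>
    simp (config := { decide := true }) [scomm, sgc, sgnZ, sub_eq_add_neg] <;>
    abel

lemma maninRel_iff (X : Matrix (Fin N) (Fin N) T) :
    sandwich (Pmat d) (Lone X * Ltwo d X) = 0 ↔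
    (∀ i j p q, scomm (d i + d j) (d p + d q) (X i j) (X p q) =
      sgnZ (d i * d j + d i * d p + d j * d p) •
        scomm (d p + d j) (d i + d q) (X p j) (X i q)) := by
  constructor
  · intro h i j p q
    have h0 : sandwich (Pmat d) (Lone X * Ltwo d X) (i, p) (j, q) = 0 := by rw [h]; rfl
    rw [scomm_tensor_entry] at h0
    have h2 := congrArg (fun t => sgc T ((d p + d q) * d j) * t) h0
    simp only [mul_zero] at h2
    rw [← mul_assoc, sgc_mul_self, one_mul] at h2
    exact sub_eq_zero.mp h2
  · intro h
    ext ⟨i, p⟩ ⟨j, q⟩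
    rw [scomm_tensor_entry]
    rw [sub_eq_zero.mpr (h i j p q), mul_zero]
    rfl

end Tensor

section AbstractInverse

lemma smul_sandwich {E : Type*} [Ring E] [Algebra ℂ E] (P Z : E) :
    ((1/2 : ℂ) • (1 - P)) * Z * ((1/2 : ℂ) • (1 + P))
      = (1/4 : ℂ) • ((1 - P) * Z * (1 + P)) := by
  rw [smul_mul_assoc, smul_mul_assoc, mul_smul_comm, smul_smul]
  norm_num

lemma invManin {E : Type*} [Ring E] [Algebra ℂ E] (P X Y : E) (hP : P * P = 1)
    (hYX : Y * X = 1)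
    (hW : (1 - P) * X * (1 + P) = 0)
    (hu : IsUnit ((((1/2 : ℂ) • (1 + P)) * X * ((1/2 : ℂ) • (1 + P))) + (1/2 : ℂ) • (1 - P))) :
    (1 - P) * Y * (1 + P) = 0 := by
  set e : E := (1/2 : ℂ) • (1 + P) with he
  set f : E := (1/2 : ℂ) • (1 - P) with hf
  have hef : e + f = 1 := by
    rw [he, hf, ← smul_add]
    have h2 : (1 + P) + (1 - P) = (2 : ℂ) • (1 : E) := by
      rw [two_smul]; noncomm_ring
    rw [h2, smul_smul]
    norm_num
  have hef0 : e * f = 0 := by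
    have h1 : (1 + P) * (1 - P) = 1 - P * P := by noncomm_ring
    rw [he, hf, smul_mul_assoc, mul_smul_comm, smul_smul, h1, hP, sub_self, smul_zero]
  have hfe0 : f * e = 0 := by
    have h1 : (1 - P) * (1 + P) = 1 - P * P := by noncomm_ring
    rw [he, hf, smul_mul_assoc, mul_smul_comm, smul_smul, h1, hP, sub_self, smul_zero]
  have hee : e * e = e := by
    have := congrArg (fun t => e * t) hef
    simpa [mul_add, hef0] using this
  have hfXe : f * X * e = 0 := by
    rw [hf, he, smul_sandwich, hW, smul_zero]
  have hXe : e * X * e = X * e := by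
    have h1 : e * X * e + f * X * e = X * e := by
      rw [← add_mul, ← add_mul, hef, one_mul]
    rw [hfXe, add_zero] at h1
    exact h1
  have hru : (f * Y * e) * (e * X * e + f) = 0 := by
    rw [mul_add]
    have a1 : (f * Y * e) * (e * X * e) = (f * Y) * ((e * e) * X * e) := by
      noncomm_ring
    have a2 : (f * Y * e) * f = (f * Y) * (e * f) := by noncomm_ring
    rw [a1, a2, hee, hef0, mul_zero, add_zero]
    have a3 : (f * Y) * (e * X * e) = f * Y * (e * X * e) := by noncomm_ring
    rw [a3, hXe]
    have a4 : f * Y * (X * e) = f * (Y * X) * e := by noncomm_ring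
    rw [a4, hYX, mul_one, hfe0]
  have hr0 : f * Y * e = 0 := by
    obtain ⟨v, hv⟩ := hu
    calc f * Y * e = (f * Y * e) * (↑v * ↑v⁻¹) := by rw [Units.mul_inv, mul_one]
      _ = ((f * Y * e) * ↑v) * ↑v⁻¹ := (mul_assoc _ _ _).symm
      _ = 0 := by rw [hv, hru, zero_mul]
  have hq : f * Y * e = (1/4 : ℂ) • ((1 - P) * Y * (1 + P)) := by
    rw [hf, he, smul_sandwich]
  rw [hq] at hr0
  have := congrArg (fun z => (4 : ℂ) • z) hr0
  simpa [smul_smul] using this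

lemma sandwich_swap {E : Type*} [Ring E] (P L1 L2 : E) (hP : P * P = 1)
    (hc : P * L1 * P = L2) (h : (1 - P) * (L1 * L2) * (1 + P) = 0) :
    (1 - P) * (L2 * L1) * (1 + P) = 0 := by
  have hmid : L2 * L1 = P * (L1 * L2) * P := by
    rw [← hc]
    have h1 : P * (L1 * (P * L1 * P)) * P = ((P * L1 * P) * L1) * (P * P) := by
      noncomm_ring
    rw [h1, hP, mul_one]
  rw [hmid]
  have h2 : (1 - P) * (P * (L1 * L2) * P) * (1 + P)
      = ((1 - P) * P) * (L1 * L2) * (P * (1 + P)) := by noncomm_ring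
  have h3 : (1 - P) * P = P - P * P := by noncomm_ring
  have h4 : P * (1 + P) = P + P * P := by noncomm_ring
  rw [h2, h3, h4, hP]
  have h5 : (P - 1) * (L1 * L2) * (P + 1) = -((1 - P) * (L1 * L2) * (1 + P)) := by
    noncomm_ring
  rw [h5, h, neg_zero]

lemma idem_sum_one {E : Type*} [Ring E] [Algebra ℂ E] (P : E) (hP : P * P = 1) :
    (((1/2 : ℂ) • (1 + P)) * ((1/2 : ℂ) • (1 + P))) + (1/2 : ℂ) • (1 - P) = 1 := by
  have h1 : (1 + P) * (1 + P) = 1 + P + P + P * P := by noncomm_ring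
  rw [smul_mul_assoc, mul_smul_comm, smul_smul, h1, hP]
  module

end AbstractInverse

section MapLemmas

variable {T T' : Type*} [Ring T] [Ring T'] {N : ℕ}

lemma map_Pmat (f : T →+* T') (d : Fin N → ZMod 2) :
    (Pmat d : Matrix (Fin N × Fin N) (Fin N × Fin N) T).map f = Pmat d := by
  ext x y
  simp [Pmat, Matrix.map_apply, apply_ite f, sgc, map_intCast]

lemma map_Lone (f : T →+* T') (X : Matrix (Fin N) (Fin N) T) :
    (Lone X : Matrix (Fin N × Fin N) (Fin N × Fin N) T).map f = Lone (X.map f) := by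
  ext x y
  simp [Lone, Matrix.map_apply, apply_ite f]

lemma map_Ltwo (f : T →+* T') (d : Fin N → ZMod 2) (X : Matrix (Fin N) (Fin N) T) :
    (Ltwo d X : Matrix (Fin N × Fin N) (Fin N × Fin N) T).map f = Ltwo d (X.map f) := by
  ext x y
  simp [Ltwo, Matrix.map_apply, apply_ite f, sgc, map_intCast]

end MapLemmas

section ConstCoeff

variable {A : Type*} [Ring A] [Algebra ℂ A] {n : Type*} [Fintype n] [DecidableEq n]

lemma cmap_smul (c : ℂ) (x : Matrix n n (PowerSeries A)) :
    (c • x).map ((PowerSeries.constantCoeff (R := A))) = c • x.map ((PowerSeries.constantCoeff (R := A))) := rfl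

lemma cmap_one_of_affine (X : Matrix n n (PowerSeries A))
    (h : ∀ i j, PowerSeries.coeff 0 (X i j) = if i = j then 1 else 0) :
    X.map ((PowerSeries.constantCoeff (R := A))) = 1 := by
  ext a b
  rw [Matrix.map_apply, ← PowerSeries.coeff_zero_eq_constantCoeff_apply, h a b,
    Matrix.one_apply]

lemma affine_of_cmap_one (X : Matrix n n (PowerSeries A))
    (h : X.map ((PowerSeries.constantCoeff (R := A))) = 1) :
    ∀ i j, PowerSeries.coeff 0 (X i j) = if i = j then 1 else 0 := by
  intro i j
  have := congrFun (congrFun h i) j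
  rw [Matrix.map_apply] at this
  rw [PowerSeries.coeff_zero_eq_constantCoeff_apply, this, Matrix.one_apply]

end ConstCoeff

section Parity

lemma zmod2_mid : ∀ a b c : ZMod 2, a + b + (b + c) = a + c := by decide

lemma inv_parity {A : Type*} [Ring A] [Algebra ℂ A] (S : SuperAlg A) {N : ℕ}
    (d : Fin N → ZMod 2) (M B : Matrix (Fin N) (Fin N) (PowerSeries A))
    (hMg : ∀ i j t, PowerSeries.coeff t (M i j) ∈ S.g (d i + d j))
    (haff : ∀ i j, PowerSeries.coeff 0 (M i j) = if i = j then 1 else 0)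
    (hMB : M * B = 1) :
    ∀ t i j, PowerSeries.coeff t (B i j) ∈ S.g (d i + d j) := by
  intro t
  induction t using Nat.strong_induction_on with
  | _ t IH =>
  intro i j
  have hone : ∀ p : ℕ, ∀ a b : Fin N,
      PowerSeries.coeff p ((1 : Matrix (Fin N) (Fin N) (PowerSeries A)) a b)
        = if p = 0 ∧ a = b then 1 else 0 := by
    intro p a b
    by_cases hab : a = b
    · subst hab
      rw [Matrix.one_apply_eq, PowerSeries.coeff_one]
      by_cases hp : p = 0 <;> simp [hp]
    · rw [Matrix.one_apply_ne hab, map_zero]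
      simp [hab]
  have hBeq : B i j = (1 : Matrix (Fin N) (Fin N) (PowerSeries A)) i j
      - ((M - 1) * B) i j := by
    have h1 : (M - 1) * B = 1 - B := by rw [sub_mul, Matrix.one_mul, hMB]
    rw [h1, Matrix.sub_apply]
    abel
  rw [hBeq, map_sub]
  refine Submodule.sub_mem _ ?_ ?_
  · rw [hone]
    by_cases hc : t = 0 ∧ i = j
    · rw [if_pos hc]
      have : d i + d j = 0 := by rw [hc.2, CharTwo.add_self_eq_zero]
      rw [this]
      exact S.one_mem
    · rw [if_neg hc]
      exact Submodule.zero_mem _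
  · rw [Matrix.mul_apply, map_sum]
    refine Submodule.sum_mem _ fun k _ => ?_
    rw [PowerSeries.coeff_mul]
    refine Submodule.sum_mem _ fun x hx => ?_
    have hxsum : x.1 + x.2 = t := Finset.HasAntidiagonal.mem_antidiagonal.mp hx
    rcases Nat.eq_zero_or_pos x.1 with h0 | h0
    · have hz : PowerSeries.coeff x.1 ((M - 1) i k) = 0 := by
        rw [h0, Matrix.sub_apply, map_sub, haff, hone]
        by_cases hik : i = k <;> simp [hik]
      rw [hz, zero_mul]
      exact Submodule.zero_mem _
    · have hx2 : x.2 < t := by omega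
      have hM' : PowerSeries.coeff x.1 ((M - 1) i k) ∈ S.g (d i + d k) := by
        rw [Matrix.sub_apply, map_sub, hone]
        rw [if_neg (by omega : ¬(x.1 = 0 ∧ i = k)), sub_zero]
        exact hMg i k x.1
      have hprod := S.mul_mem hM' (IH x.2 hx2 k j)
      rwa [zmod2_mid] at hprod

end Parity
/-- **Statement 10.**  An affine Manin matrix `A(w)` of parity `s` over a superalgebra `𝒜`
has a two-sided inverse with entries in `𝒜[[w]]`, which is again an affine Manin matrix of
parity `s`. -/
theorem statement10 (A : Type*) [Ring A] [Algebra ℂ A] (S : SuperAlg A) (m n : ℕ)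
    (s : Fin (m + n) → ℤ) (hs : IsParitySeq s)
    (hm : (Finset.univ.filter fun i => s i = 1).card = m)
    (M : Matrix (Fin (m + n)) (Fin (m + n)) (PowerSeries A))
    (haff : IsAffine M) (hM : IsManin (gPS S.g) s M) :
    ∃ B : Matrix (Fin (m + n)) (Fin (m + n)) (PowerSeries A),
      M * B = 1 ∧ B * M = 1 ∧ IsAffine B ∧ IsManin (gPS S.g) s B := by

  classical
  obtain ⟨u, hu⟩ := isUnit_of_coeff_zero_one M haff
  set B : Matrix (Fin (m + n)) (Fin (m + n)) (PowerSeries A) := Units.val u⁻¹ with hB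
  have hMB : M * B = 1 := by rw [hB, ← hu, Units.mul_inv]
  have hBM : B * M = 1 := by rw [hB, ← hu, Units.inv_mul]
  have hMg : ∀ i j t, PowerSeries.coeff t (M i j) ∈ S.g (pdeg s i + pdeg s j) :=
    fun i j t => hM.1 i j t
  have hBg := inv_parity S (pdeg s) M B hMg haff hMB
  have hcmM : M.map ((PowerSeries.constantCoeff (R := A))) = 1 := cmap_one_of_affine M haff
  have hcmB : B.map ((PowerSeries.constantCoeff (R := A))) = 1 := by
    have h1 : M.map ((PowerSeries.constantCoeff (R := A))) * B.map ((PowerSeries.constantCoeff (R := A)))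
        = 1 := by
      have := congrArg (RingHom.mapMatrix ((PowerSeries.constantCoeff (R := A)))) hMB
      rw [map_mul, map_one] at this
      exact this
    rwa [hcmM, one_mul] at h1
  have haffB : IsAffine B := affine_of_cmap_one B hcmB
  -- Manin relations
  have hP2T := Pmat_mul_Pmat (T := PowerSeries A) (pdeg s)
  have hWM : sandwich (Pmat (pdeg s)) (Lone M * Ltwo (pdeg s) M) = 0 :=
    (maninRel_iff (pdeg s) M).mpr hM.2
  have hW2 : (1 - Pmat (pdeg s)) * (Ltwo (pdeg s) M * Lone M) * (1 + Pmat (pdeg s)) = 0 := by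
    refine sandwich_swap (Pmat (pdeg s)) (Lone M) (Ltwo (pdeg s) M) hP2T
      (conjP (pdeg s) M) ?_
    have := hWM
    unfold sandwich at this
    exact this
  have hYX : (Lone B * Ltwo (pdeg s) B) * (Ltwo (pdeg s) M * Lone M) = 1 := by
    have hassoc : (Lone B * Ltwo (pdeg s) B) * (Ltwo (pdeg s) M * Lone M)
        = Lone B * (Ltwo (pdeg s) B * Ltwo (pdeg s) M) * Lone M := by noncomm_ring
    rw [hassoc, Ltwo_mul, hBM, Ltwo_one, mul_one, Lone_mul, hBM, Lone_one]
  have hu' : IsUnit ((((1/2 : ℂ) • (1 + Pmat (pdeg s))) * (Ltwo (pdeg s) M * Lone M) *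
      ((1/2 : ℂ) • (1 + Pmat (pdeg s)))) + (1/2 : ℂ) • (1 - Pmat (pdeg s))) := by
    apply isUnit_of_coeff_zero_one
    apply affine_of_cmap_one
    have hrw : ∀ Z : Matrix (Fin (m + n) × Fin (m + n)) (Fin (m + n) × Fin (m + n))
        (PowerSeries A), Z.map ((PowerSeries.constantCoeff (R := A)))
          = RingHom.mapMatrix ((PowerSeries.constantCoeff (R := A))) Z := fun _ => rfl
    rw [hrw, map_add, map_mul, map_mul]
    have hX1 : RingHom.mapMatrix ((PowerSeries.constantCoeff (R := A)))
        (Ltwo (pdeg s) M * Lone M) = 1 := by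
      rw [map_mul]
      have h1 : RingHom.mapMatrix ((PowerSeries.constantCoeff (R := A))) (Ltwo (pdeg s) M)
          = Ltwo (pdeg s) (M.map ((PowerSeries.constantCoeff (R := A)))) := by
        rw [RingHom.mapMatrix_apply, map_Ltwo]
      have h2 : RingHom.mapMatrix ((PowerSeries.constantCoeff (R := A))) (Lone M)
          = Lone (M.map ((PowerSeries.constantCoeff (R := A)))) := by
        rw [RingHom.mapMatrix_apply, map_Lone]
      rw [h1, h2, hcmM, Ltwo_one, Lone_one, one_mul]
    have hE : RingHom.mapMatrix ((PowerSeries.constantCoeff (R := A)))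
        ((1/2 : ℂ) • (1 + Pmat (pdeg s)))
          = (1/2 : ℂ) • (1 + Pmat (T := A) (pdeg s)) := by
      rw [RingHom.mapMatrix_apply, cmap_smul]
      congr 1
      have : (1 + Pmat (T := PowerSeries A) (pdeg s)).map ((PowerSeries.constantCoeff (R := A)))
          = RingHom.mapMatrix ((PowerSeries.constantCoeff (R := A)))
            (1 + Pmat (T := PowerSeries A) (pdeg s)) := rfl
      rw [this, map_add, map_one, RingHom.mapMatrix_apply, map_Pmat]
    have hF : RingHom.mapMatrix ((PowerSeries.constantCoeff (R := A)))
        ((1/2 : ℂ) • (1 - Pmat (pdeg s)))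
          = (1/2 : ℂ) • (1 - Pmat (T := A) (pdeg s)) := by
      rw [RingHom.mapMatrix_apply, cmap_smul]
      congr 1
      have : (1 - Pmat (T := PowerSeries A) (pdeg s)).map ((PowerSeries.constantCoeff (R := A)))
          = RingHom.mapMatrix ((PowerSeries.constantCoeff (R := A)))
            (1 - Pmat (T := PowerSeries A) (pdeg s)) := rfl
      rw [this, map_sub, map_one, RingHom.mapMatrix_apply, map_Pmat]
    rw [hX1, hE, hF, mul_one]
    exact idem_sum_one (Pmat (pdeg s)) (Pmat_mul_Pmat (T := A) (pdeg s))
  have hWB : (1 - Pmat (pdeg s)) * (Lone B * Ltwo (pdeg s) B) * (1 + Pmat (pdeg s)) = 0 :=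
    invManin (Pmat (pdeg s)) (Ltwo (pdeg s) M * Lone M) (Lone B * Ltwo (pdeg s) B)
      hP2T hYX hW2 hu'
  have hrelB := (maninRel_iff (pdeg s) B).mp (by unfold sandwich; exact hWB)
  exact ⟨B, hMB, hBM, haffB, ⟨fun i j t => hBg t i j, hrelB⟩⟩
end
end

section
/- Let A(w) be an affine Manin matrix of parity s over a superalgebra 𝒜, and let σ ∈ S_{m+n}. Then Ber^s A(w) = Ber^{σ(s)} σ(A(w)), where σ(A(w)) = (a_{σ^{−1}(i),σ^{−1}(j)}(w))_{i,j} and σ(s) = (s_{σ^{−1}(1)},…,s_{σ^{−1}(m+n)}). -/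
set_option maxHeartbeats 2000000
set_option linter.unusedSectionVars false
set_option linter.unusedVariables false
set_option linter.unreachableTactic false
set_option linter.unusedTactic false


noncomputable section
open scoped Classical

namespace S13



variable {A : Type*} [Ring A] {n : Type*} [Fintype n] [DecidableEq n]

/-- Matrices over power series as power series of matrices. -/
def matPS : Matrix n n (PowerSeries A) →+* PowerSeries (Matrix n n A) where
  toFun M := PowerSeries.mk fun t => Matrix.of fun i j => PowerSeries.coeff t (M i j)
  map_one' := by
    ext t i j
    simp only [PowerSeries.coeff_mk, Matrix.of_apply, Matrix.one_apply, PowerSeries.coeff_one,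
      apply_ite (PowerSeries.coeff t), map_zero, map_one]
    rw [apply_ite (fun X : Matrix n n A => X i j)]
    simp [Matrix.one_apply]
    split_ifs <;> simp_all
  map_zero' := by ext t i j; simp
  map_add' U V := by ext t i j; simp [Matrix.add_apply]
  map_mul' U V := by
    ext t i j
    simp only [PowerSeries.coeff_mk, Matrix.of_apply, PowerSeries.coeff_mul,
      Matrix.mul_apply, map_sum, Matrix.sum_apply]
    rw [Finset.sum_comm]

theorem matPS_inj : Function.Injective (matPS (A := A) (n := n)) := by
  intro U V h
  ext i j t
  have := congrArg (fun f => (PowerSeries.coeff t f) i j) h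
  simpa [matPS] using this

theorem coeff_matPS (M : Matrix n n (PowerSeries A)) (t : ℕ) (i j : n) :
    PowerSeries.coeff t (matPS M) i j = PowerSeries.coeff t (M i j) := by
  simp [matPS]

/-- entrywise constant coefficient of a matrix over power series -/
def cc0 (M : Matrix n n (PowerSeries A)) : Matrix n n A :=
  Matrix.of fun i j => PowerSeries.constantCoeff (M i j)

theorem cc0_matPS (M : Matrix n n (PowerSeries A)) :
    PowerSeries.constantCoeff (matPS M) = cc0 M := by
  ext i j
  rw [← PowerSeries.coeff_zero_eq_constantCoeff_apply, coeff_matPS]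
  simp [cc0, PowerSeries.coeff_zero_eq_constantCoeff]

theorem isUnit_of_cc0 (M : Matrix n n (PowerSeries A)) (h : IsUnit (cc0 M)) : IsUnit M := by
  have h1 : IsUnit (matPS M) := by
    rw [PowerSeries.isUnit_iff_constantCoeff, cc0_matPS]
    exact h
  rcases h1 with ⟨u, hu⟩
  obtain ⟨V, hV⟩ : ∃ V, matPS V = (↑u⁻¹ : PowerSeries (Matrix n n A)) := by
    refine ⟨Matrix.of fun i j => PowerSeries.mk fun t =>
      (PowerSeries.coeff t (↑u⁻¹ : PowerSeries (Matrix n n A))) i j, ?_⟩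
    ext t i j
    simp [matPS]
  refine ⟨⟨M, V, ?_, ?_⟩, rfl⟩
  · apply matPS_inj
    rw [map_mul, ← hu, hV, map_one]
    exact u.mul_inv
  · apply matPS_inj
    rw [map_mul, ← hu, hV, map_one]
    exact u.inv_mul

theorem cc0_one : cc0 (1 : Matrix n n (PowerSeries A)) = 1 := by
  ext i j
  simp [cc0, Matrix.one_apply, apply_ite (PowerSeries.constantCoeff)]

theorem cc0_mul (U V : Matrix n n (PowerSeries A)) : cc0 (U * V) = cc0 U * cc0 V := by
  calc cc0 (U*V) = PowerSeries.constantCoeff (matPS (U*V)) := (cc0_matPS _).symm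
    _ = PowerSeries.constantCoeff (matPS U * matPS V) := by rw [map_mul]
    _ = PowerSeries.constantCoeff (matPS U) * PowerSeries.constantCoeff (matPS V) :=
        map_mul _ _ _
    _ = _ := by rw [cc0_matPS, cc0_matPS]

theorem cc0_inverse (M : Matrix n n (PowerSeries A)) (h : IsUnit (cc0 M)) :
    cc0 (Ring.inverse M) = Ring.inverse (cc0 M) := by
  have hM : IsUnit M := isUnit_of_cc0 M h
  have h1 : M * Ring.inverse M = 1 := Ring.mul_inverse_cancel M hM
  have h2 : cc0 M * cc0 (Ring.inverse M) = 1 := by rw [← cc0_mul, h1, cc0_one]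
  calc cc0 (Ring.inverse M) = Ring.inverse (cc0 M) * (cc0 M * cc0 (Ring.inverse M)) := by
        rw [← mul_assoc, Ring.inverse_mul_cancel _ h, one_mul]
    _ = Ring.inverse (cc0 M) := by rw [h2, mul_one]


section RingInv
variable {R : Type*} [Ring R]

theorem isUnit_two (a b : R) (h1 : a * b = 1) (h2 : b * a = 1) : IsUnit a := ⟨⟨a,b,h1,h2⟩, rfl⟩

theorem ring_inverse_eq (a b : R) (h1 : a * b = 1) (h2 : b * a = 1) : Ring.inverse a = b := by
  have ha : IsUnit a := ⟨⟨a,b,h1,h2⟩, rfl⟩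
  calc Ring.inverse a = Ring.inverse a * (a * b) := by rw [h1, mul_one]
  _ = b := by rw [← mul_assoc, Ring.inverse_mul_cancel _ ha, one_mul]

theorem ring_inverse_inverse (a : R) (h : IsUnit a) :
    Ring.inverse (Ring.inverse a) = a :=
  ring_inverse_eq _ _ (Ring.inverse_mul_cancel _ h) (Ring.mul_inverse_cancel _ h)

theorem inv_mul_inv (a b : R) (ha : IsUnit a) (hb : IsUnit b) :
    Ring.inverse a * Ring.inverse b = Ring.inverse (b * a) := by
  refine (ring_inverse_eq _ _ ?_ ?_).symm
  · rw [mul_assoc, ← mul_assoc a, Ring.mul_inverse_cancel _ ha, one_mul,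
      Ring.mul_inverse_cancel _ hb]
  · rw [mul_assoc, ← mul_assoc (Ring.inverse b), Ring.inverse_mul_cancel _ hb, one_mul,
      Ring.inverse_mul_cancel _ ha]

variable {n m : Type*} [Fintype n] [DecidableEq n] [Fintype m] [DecidableEq m]

theorem subinv (X : Matrix n n R) (hX : IsUnit X) (e : m ≃ n) :
    IsUnit (X.submatrix e e) ∧
      Ring.inverse (X.submatrix e e) = (Ring.inverse X).submatrix e e := by
  have h1 : X * Ring.inverse X = 1 := Ring.mul_inverse_cancel X hX
  have h2 : Ring.inverse X * X = 1 := Ring.inverse_mul_cancel X hX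
  have e1 : X.submatrix e e * (Ring.inverse X).submatrix e e = 1 := by
    rw [Matrix.submatrix_mul_equiv, h1, Matrix.submatrix_one_equiv]
  have e2 : (Ring.inverse X).submatrix e e * X.submatrix e e = 1 := by
    rw [Matrix.submatrix_mul_equiv, h2, Matrix.submatrix_one_equiv]
  exact ⟨isUnit_two _ _ e1 e2, ring_inverse_eq _ _ e1 e2⟩

/-- Peeling off the last row and column: the inverse of the leading principal submatrix. -/
theorem peel {κ : ℕ} (B : Matrix (Fin (κ+1)) (Fin (κ+1)) R) (hB : IsUnit B)
    (hw : IsUnit (Ring.inverse B (Fin.last κ) (Fin.last κ))) :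
    IsUnit (Matrix.of fun i j : Fin κ => B i.castSucc j.castSucc) ∧
    Ring.inverse (Matrix.of fun i j : Fin κ => B i.castSucc j.castSucc) =
      Matrix.of (fun i j : Fin κ =>
        Ring.inverse B i.castSucc j.castSucc -
        Ring.inverse B i.castSucc (Fin.last κ) *
          Ring.inverse (Ring.inverse B (Fin.last κ) (Fin.last κ)) *
          Ring.inverse B (Fin.last κ) j.castSucc) := by
  set h := Ring.inverse B with hh
  set w := h (Fin.last κ) (Fin.last κ) with hwdef
  set iw := Ring.inverse w with hiw
  have hBh : B * h = 1 := Ring.mul_inverse_cancel B hB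
  have hhB : h * B = 1 := Ring.inverse_mul_cancel B hB
  have hwiw : w * iw = 1 := Ring.mul_inverse_cancel w hw
  have hiww : iw * w = 1 := Ring.inverse_mul_cancel w hw
  set C : Matrix (Fin κ) (Fin κ) R := Matrix.of fun i j => B i.castSucc j.castSucc with hC
  set C' : Matrix (Fin κ) (Fin κ) R := Matrix.of (fun i j =>
    h i.castSucc j.castSucc - h i.castSucc (Fin.last κ) * iw * h (Fin.last κ) j.castSucc) with hC'
  have key1 : C * C' = 1 := by
    ext i j
    rw [Matrix.mul_apply]
    have expand : ∀ e : Fin (κ+1),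
        B i.castSucc e * (h e j.castSucc - h e (Fin.last κ) * iw * h (Fin.last κ) j.castSucc) =
        B i.castSucc e * h e j.castSucc -
          B i.castSucc e * h e (Fin.last κ) * (iw * h (Fin.last κ) j.castSucc) := by
      intro e; rw [mul_sub, mul_assoc, ← mul_assoc (B i.castSucc e)]
    have last0 : B i.castSucc (Fin.last κ) *
        (h (Fin.last κ) j.castSucc -
          h (Fin.last κ) (Fin.last κ) * iw * h (Fin.last κ) j.castSucc) = 0 := by
      rw [mul_assoc, ← mul_assoc w iw, hwiw, one_mul, sub_self, mul_zero]
    calc ∑ e : Fin κ, C i e * C' e j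
        = ∑ e : Fin (κ+1), B i.castSucc e *
            (h e j.castSucc - h e (Fin.last κ) * iw * h (Fin.last κ) j.castSucc) := by
          rw [Fin.sum_univ_castSucc, last0, add_zero]
          rfl
      _ = (∑ e : Fin (κ+1), B i.castSucc e * h e j.castSucc) -
            (∑ e : Fin (κ+1), B i.castSucc e * h e (Fin.last κ)) *
              (iw * h (Fin.last κ) j.castSucc) := by
          rw [Finset.sum_congr rfl fun e _ => expand e, Finset.sum_sub_distrib, ← Finset.sum_mul]
      _ = (1 : Matrix (Fin (κ+1)) (Fin (κ+1)) R) i.castSucc j.castSucc -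
            (1 : Matrix (Fin (κ+1)) (Fin (κ+1)) R) i.castSucc (Fin.last κ) *
              (iw * h (Fin.last κ) j.castSucc) := by
          rw [← Matrix.mul_apply, ← Matrix.mul_apply, hBh]
      _ = (1 : Matrix (Fin κ) (Fin κ) R) i j := by
          rw [Matrix.one_apply, Matrix.one_apply, Matrix.one_apply,
            if_neg (Fin.castSucc_lt_last i).ne]
          simp [Fin.castSucc_inj]
  have key2 : C' * C = 1 := by
    ext i j
    rw [Matrix.mul_apply]
    have last0 : (h i.castSucc (Fin.last κ) -
          h i.castSucc (Fin.last κ) * iw * h (Fin.last κ) (Fin.last κ)) *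
          B (Fin.last κ) j.castSucc = 0 := by
      rw [mul_assoc _ iw, hiww, mul_one, sub_self, zero_mul]
    calc ∑ e : Fin κ, C' i e * C e j
        = ∑ e : Fin (κ+1),
            (h i.castSucc e - h i.castSucc (Fin.last κ) * iw * h (Fin.last κ) e) *
              B e j.castSucc := by
          rw [Fin.sum_univ_castSucc, last0, add_zero]
          rfl
      _ = (∑ e : Fin (κ+1), h i.castSucc e * B e j.castSucc) -
            h i.castSucc (Fin.last κ) * iw *
              (∑ e : Fin (κ+1), h (Fin.last κ) e * B e j.castSucc) := by
          have expand2 : ∀ e : Fin (κ+1),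
              (h i.castSucc e - h i.castSucc (Fin.last κ) * iw * h (Fin.last κ) e) *
                B e j.castSucc =
              h i.castSucc e * B e j.castSucc -
                h i.castSucc (Fin.last κ) * iw * (h (Fin.last κ) e * B e j.castSucc) := by
            intro e; rw [sub_mul, mul_assoc]
          rw [Finset.sum_congr rfl fun e _ => expand2 e, Finset.sum_sub_distrib,
            ← Finset.mul_sum]
      _ = (1 : Matrix (Fin (κ+1)) (Fin (κ+1)) R) i.castSucc j.castSucc -
            h i.castSucc (Fin.last κ) * iw *
              (1 : Matrix (Fin (κ+1)) (Fin (κ+1)) R) (Fin.last κ) j.castSucc := by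
          rw [← Matrix.mul_apply, ← Matrix.mul_apply, hhB]
      _ = (1 : Matrix (Fin κ) (Fin κ) R) i j := by
          rw [Matrix.one_apply, Matrix.one_apply, Matrix.one_apply,
            if_neg (Fin.castSucc_lt_last j).ne']
          simp [Fin.castSucc_inj]
  exact ⟨isUnit_two _ _ key1 key2, ring_inverse_eq _ _ key1 key2⟩

end RingInv


theorem sgnZ_add : ∀ x y : ZMod 2, sgnZ (x + y) = sgnZ x * sgnZ y := by decide

theorem sgnZ_cancel : ∀ x y : ZMod 2, sgnZ (x * y) * sgnZ (y * x) = 1 := by decide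

theorem sgnZ_sq : ∀ x : ZMod 2, sgnZ x * sgnZ x = 1 := by decide

theorem sgnL3 : ∀ a b c d : ZMod 2,
    sgnZ (b * c + (a * c + a * b + c * b)) = sgnZ (a * b + a * c) := by decide

theorem sgnL2 : ∀ a b c d : ZMod 2,
    sgnZ (b * c + (a * c + a * b + c * b + (b + c) * (a + d))) = sgnZ (c * d + b * d) := by decide

theorem sgnL4 : ∀ a b c d : ZMod 2,
    sgnZ (b * c + (a + c) * (b + d)) = sgnZ (c * d + (a * b + a * d)) := by decide

section Op
variable {R : Type*} [Ring R] {κ : ℕ} (p : Fin κ → ZMod 2)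

/-- signed permutation operator -/
def Pm : Matrix (Fin κ × Fin κ) (Fin κ × Fin κ) R :=
  Matrix.of fun x y => if x.1 = y.2 ∧ x.2 = y.1 then ((sgnZ (p y.1 * p y.2) : ℤ) : R) else 0

theorem Pm_mul (X : Matrix (Fin κ × Fin κ) (Fin κ × Fin κ) R) (x y : Fin κ × Fin κ) :
    (Pm (R := R) p * X) x y = sgnZ (p x.1 * p x.2) • X (x.2, x.1) y := by
  rw [Matrix.mul_apply]
  rw [Finset.sum_eq_single (x.2, x.1)]
  · show (if _ ∧ _ then ((sgnZ _ : ℤ) : R) else 0) * _ = _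
    rw [if_pos ⟨rfl, rfl⟩, mul_comm (p x.2), zsmul_eq_mul]
  · intro b _ hb
    show (if _ ∧ _ then ((sgnZ _ : ℤ) : R) else 0) * _ = 0
    rw [if_neg, zero_mul]
    rintro ⟨h1, h2⟩
    exact hb (Prod.ext h2.symm h1.symm)
  · intro h
    exact absurd (Finset.mem_univ _) h

theorem mul_Pm (X : Matrix (Fin κ × Fin κ) (Fin κ × Fin κ) R) (x y : Fin κ × Fin κ) :
    (X * Pm (R := R) p) x y = sgnZ (p y.1 * p y.2) • X x (y.2, y.1) := by
  rw [Matrix.mul_apply]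
  rw [Finset.sum_eq_single (y.2, y.1)]
  · show _ * (if _ ∧ _ then ((sgnZ _ : ℤ) : R) else 0) = _
    rw [if_pos ⟨rfl, rfl⟩, zsmul_eq_mul, (Int.cast_commute _ _).eq]
  · intro b _ hb
    show _ * (if _ ∧ _ then ((sgnZ _ : ℤ) : R) else 0) = 0
    rw [if_neg, mul_zero]
    rintro ⟨h1, h2⟩
    exact hb (Prod.ext h1 h2)
  · intro h
    exact absurd (Finset.mem_univ _) h

theorem Pm_sq : (Pm (R := R) p) * Pm p = 1 := by
  ext x y
  rw [Pm_mul]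
  show (sgnZ _) • (if _ ∧ _ then ((sgnZ _ : ℤ) : R) else 0) = _
  rw [Matrix.one_apply]
  by_cases h : x = y
  · subst h
    rw [if_pos ⟨rfl, rfl⟩, if_pos rfl]
    rw [← Int.cast_smul_eq_zsmul R, smul_eq_mul, ← Int.cast_mul, sgnZ_sq, Int.cast_one]
  · rw [if_neg, if_neg h, smul_zero]
    rintro ⟨h1, h2⟩
    exact h (Prod.ext h2 h1)


variable (B h : Matrix (Fin κ) (Fin κ) R)

/-- `Q = A₁ A₂` with super signs -/
def Qm : Matrix (Fin κ × Fin κ) (Fin κ × Fin κ) R :=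
  Matrix.of fun x y => sgnZ (p x.2 * p y.1) • (B x.1 y.1 * B x.2 y.2)

/-- `Q⁻¹ = Ã₂ Ã₁` with super signs -/
def Qm' : Matrix (Fin κ × Fin κ) (Fin κ × Fin κ) R :=
  Matrix.of fun x y => sgnZ (p x.1 * p y.2) • (h x.2 y.2 * h x.1 y.1)

theorem Qm_mul_Qm' (hBh : B * h = 1) : Qm (R := R) p B * Qm' p h = 1 := by
  ext x y
  rw [Matrix.mul_apply, Fintype.sum_prod_type]
  have step1 : ∀ u : Fin κ,
      (∑ v, Qm (R := R) p B x (u, v) * Qm' p h (u, v) y)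
        = (sgnZ (p x.2 * p u) * sgnZ (p u * p y.2)) •
            (B x.1 u * (1 : Matrix (Fin κ) (Fin κ) R) x.2 y.2 * h u y.1) := by
    intro u
    have : ∀ v : Fin κ, Qm (R := R) p B x (u, v) * Qm' p h (u, v) y
        = (sgnZ (p x.2 * p u) * sgnZ (p u * p y.2)) •
            (B x.1 u * (B x.2 v * h v y.2) * h u y.1) := by
      intro v
      show (sgnZ (p x.2 * p u) • (B x.1 u * B x.2 v)) *
          (sgnZ (p u * p y.2) • (h v y.2 * h u y.1)) = _
      rw [smul_mul_assoc, mul_smul_comm, smul_smul]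
      congr 1
      rw [mul_assoc, ← mul_assoc (B x.2 v), ← mul_assoc, ← mul_assoc]
    rw [Finset.sum_congr rfl fun v _ => this v, ← Finset.smul_sum]
    congr 1
    rw [← hBh, Matrix.mul_apply, Finset.mul_sum, Finset.sum_mul]
  rw [Finset.sum_congr rfl fun u _ => step1 u]
  by_cases hx : x.2 = y.2
  · have hone : (1 : Matrix (Fin κ) (Fin κ) R) x.2 y.2 = 1 := by
      rw [Matrix.one_apply, if_pos hx]
    have : ∀ u : Fin κ,
        (sgnZ (p x.2 * p u) * sgnZ (p u * p y.2)) •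
            (B x.1 u * (1 : Matrix (Fin κ) (Fin κ) R) x.2 y.2 * h u y.1)
          = B x.1 u * h u y.1 := by
      intro u
      rw [hone, mul_one, hx, sgnZ_cancel, one_smul]
    rw [Finset.sum_congr rfl fun u _ => this u, ← Matrix.mul_apply, hBh]
    rw [Matrix.one_apply, Matrix.one_apply]
    by_cases h1 : x.1 = y.1
    · rw [if_pos h1, if_pos (Prod.ext h1 hx)]
    · rw [if_neg h1, if_neg fun hxy => h1 (congrArg Prod.fst hxy)]
  · have hone : (1 : Matrix (Fin κ) (Fin κ) R) x.2 y.2 = 0 := by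
      rw [Matrix.one_apply, if_neg hx]
    have : ∀ u : Fin κ,
        (sgnZ (p x.2 * p u) * sgnZ (p u * p y.2)) •
            (B x.1 u * (1 : Matrix (Fin κ) (Fin κ) R) x.2 y.2 * h u y.1)
          = 0 := by
      intro u
      rw [hone, mul_zero, zero_mul, smul_zero]
    rw [Finset.sum_congr rfl fun u _ => this u, Finset.sum_const_zero, Matrix.one_apply,
      if_neg fun hxy => hx (congrArg Prod.snd hxy)]

theorem Qm'_mul_Qm (hhB : h * B = 1) : Qm' (R := R) p h * Qm p B = 1 := by
  ext x y
  rw [Matrix.mul_apply, Fintype.sum_prod_type_right]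
  have step1 : ∀ v : Fin κ,
      (∑ u, Qm' (R := R) p h x (u, v) * Qm p B (u, v) y)
        = (sgnZ (p x.1 * p v) * sgnZ (p v * p y.1)) •
            (h x.2 v * (1 : Matrix (Fin κ) (Fin κ) R) x.1 y.1 * B v y.2) := by
    intro v
    have : ∀ u : Fin κ, Qm' (R := R) p h x (u, v) * Qm p B (u, v) y
        = (sgnZ (p x.1 * p v) * sgnZ (p v * p y.1)) •
            (h x.2 v * (h x.1 u * B u y.1) * B v y.2) := by
      intro u
      show (sgnZ (p x.1 * p v) • (h x.2 v * h x.1 u)) *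
          (sgnZ (p v * p y.1) • (B u y.1 * B v y.2)) = _
      rw [smul_mul_assoc, mul_smul_comm, smul_smul]
      congr 1
      rw [mul_assoc, ← mul_assoc (h x.1 u), ← mul_assoc, ← mul_assoc]
    rw [Finset.sum_congr rfl fun u _ => this u, ← Finset.smul_sum]
    congr 1
    rw [← hhB, Matrix.mul_apply, Finset.mul_sum, Finset.sum_mul]
  rw [Finset.sum_congr rfl fun v _ => step1 v]
  by_cases hx : x.1 = y.1
  · have hone : (1 : Matrix (Fin κ) (Fin κ) R) x.1 y.1 = 1 := by
      rw [Matrix.one_apply, if_pos hx]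
    have : ∀ v : Fin κ,
        (sgnZ (p x.1 * p v) * sgnZ (p v * p y.1)) •
            (h x.2 v * (1 : Matrix (Fin κ) (Fin κ) R) x.1 y.1 * B v y.2)
          = h x.2 v * B v y.2 := by
      intro v
      rw [hone, mul_one, hx, sgnZ_cancel, one_smul]
    rw [Finset.sum_congr rfl fun v _ => this v, ← Matrix.mul_apply, hhB]
    rw [Matrix.one_apply, Matrix.one_apply]
    by_cases h2 : x.2 = y.2
    · rw [if_pos h2, if_pos (Prod.ext hx h2)]
    · rw [if_neg h2, if_neg fun hxy => h2 (congrArg Prod.snd hxy)]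
  · have hone : (1 : Matrix (Fin κ) (Fin κ) R) x.1 y.1 = 0 := by
      rw [Matrix.one_apply, if_neg hx]
    have : ∀ v : Fin κ,
        (sgnZ (p x.1 * p v) * sgnZ (p v * p y.1)) •
            (h x.2 v * (1 : Matrix (Fin κ) (Fin κ) R) x.1 y.1 * B v y.2)
          = 0 := by
      intro v
      rw [hone, mul_zero, zero_mul, smul_zero]
    rw [Finset.sum_congr rfl fun v _ => this v, Finset.sum_const_zero, Matrix.one_apply,
      if_neg fun hxy => hx (congrArg Prod.fst hxy)]


theorem maninJ
    (hrel : ∀ i j k l, scomm (p i + p j) (p k + p l) (B i j) (B k l) =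
      sgnZ (p i * p j + p i * p k + p j * p k) • scomm (p k + p j) (p i + p l) (B k j) (B i l)) :
    (1 - Pm (R := R) p) * Qm p B * (1 + Pm p) = 0 := by
  have expand : (1 - Pm (R := R) p) * Qm p B * (1 + Pm p)
      = Qm p B + Qm p B * Pm p - Pm p * Qm p B - Pm p * Qm p B * Pm p := by
    rw [sub_mul, one_mul, mul_add, mul_one, sub_mul]
    abel
  rw [expand]
  ext x y
  obtain ⟨i, j⟩ := x
  obtain ⟨k, l⟩ := y
  simp only [Matrix.sub_apply, Matrix.add_apply, Matrix.zero_apply]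
  rw [Pm_mul, mul_Pm, mul_Pm p (Pm p * Qm p B), Pm_mul]
  have key := sub_eq_iff_eq_add.mp (hrel i k j l)
  simp only [scomm] at key
  show Qm (R := R) p B (i,j) (k,l) + sgnZ (p (k,l).1 * p (k,l).2) • Qm p B (i,j) ((k,l).2, (k,l).1)
      - sgnZ (p (i,j).1 * p (i,j).2) • Qm p B ((i,j).2, (i,j).1) (k,l)
      - sgnZ (p (k,l).1 * p (k,l).2) • (sgnZ (p (i,j).1 * p (i,j).2) •
          Qm p B ((i,j).2, (i,j).1) ((k,l).2, (k,l).1)) = 0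
  show sgnZ (p j * p k) • (B i k * B j l) + sgnZ (p k * p l) • (sgnZ (p j * p l) • (B i l * B j k))
      - sgnZ (p i * p j) • (sgnZ (p i * p k) • (B j k * B i l))
      - sgnZ (p k * p l) • (sgnZ (p i * p j) • (sgnZ (p i * p l) • (B j l * B i k))) = 0
  rw [key]
  simp only [smul_add, smul_sub, smul_smul, ← sgnZ_add]
  rw [sgnL3 (p i) (p j) (p k) (p l), sgnL2 (p i) (p j) (p k) (p l),
    sgnL4 (p i) (p j) (p k) (p l)]
  abel


theorem transfer {T : Type*} [Ring T] (P Q Q' : T) (hP : P * P = 1)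
    (hQQ' : Q * Q' = 1)
    (hJ : (1 - P) * Q * (1 + P) = 0)
    (hZ : IsUnit ((1 - P) * Q * (1 - P) + ((1 + P) + (1 + P)))) :
    (1 - P) * Q' * (1 + P) = 0 := by
  set F : T := 1 - P with hF
  set E : T := 1 + P with hE
  have hEF : E * F = 0 := by
    rw [hE, hF, mul_sub, mul_one, add_mul, one_mul, hP]
    abel
  have hFE : F * E = 0 := by
    rw [hE, hF, mul_add, mul_one, sub_mul, one_mul, hP]
    abel
  have hFF : F * F = F + F := by
    rw [hF, mul_sub, mul_one, sub_mul, one_mul, hP]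
    abel
  have hF2 : F = (1 + 1) - E := by rw [hF, hE]; abel
  set X : T := F * Q' * E with hX
  have hQQE : F * Q * (Q' * E) = F * E := by
    rw [← mul_assoc, mul_assoc F Q Q', hQQ', mul_one]
  have key : F * Q * F * (Q' * E) = 0 := by
    calc F * Q * F * (Q' * E) = F * Q * ((1 + 1) - E) * (Q' * E) := by rw [← hF2]
      _ = F * Q * (1 + 1) * (Q' * E) - F * Q * E * (Q' * E) := by
          rw [mul_sub, sub_mul]
      _ = (F * Q * (Q' * E) + F * Q * (Q' * E)) - 0 := by
          rw [hJ, zero_mul, mul_add, mul_one, add_mul]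
      _ = 0 := by rw [hQQE, hFE, add_zero, sub_zero]
  have hZX : (F * Q * F + (E + E)) * X = 0 := by
    have hEX : E * X = 0 := by
      rw [hX, ← mul_assoc, ← mul_assoc, hEF, zero_mul, zero_mul]
    have h1 : F * Q * F * X = 0 := by
      have assoc1 : F * Q * F * X = F * Q * (F * F) * (Q' * E) := by
        rw [hX]; simp only [mul_assoc]
      rw [assoc1, hFF, mul_add, add_mul]
      simp only [key, add_zero]
    rw [add_mul, add_mul, h1, hEX, add_zero, add_zero]
  have : X = 0 := by
    have := congrArg (fun t => Ring.inverse (F * Q * F + (E + E)) * t) hZX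
    simpa [← mul_assoc, Ring.inverse_mul_cancel _ hZ] using this
  exact this

theorem relh
    (hrel : ∀ i j k l, scomm (p i + p j) (p k + p l) (B i j) (B k l) =
      sgnZ (p i * p j + p i * p k + p j * p k) • scomm (p k + p j) (p i + p l) (B k j) (B i l))
    (hB : IsUnit B)
    (hZ : IsUnit ((1 - Pm (R := R) p) * Qm p B * (1 - Pm p) + ((1 + Pm p) + (1 + Pm p)))) :
    ∀ i j k l : Fin κ,
      sgnZ (p i * p l) • (Ring.inverse B j l * Ring.inverse B i k)
        + sgnZ (p k * p l + p i * p k) • (Ring.inverse B j k * Ring.inverse B i l)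
        - sgnZ (p i * p j + p j * p l) • (Ring.inverse B i l * Ring.inverse B j k)
        - sgnZ (p k * p l + (p i * p j + p j * p k)) •
            (Ring.inverse B i k * Ring.inverse B j l) = 0 := by
  intro i j k l
  set h : Matrix (Fin κ) (Fin κ) R := Ring.inverse B with hh
  have hBh : B * h = 1 := Ring.mul_inverse_cancel B hB
  have hhB : h * B = 1 := Ring.inverse_mul_cancel B hB
  have hJ := maninJ p B hrel
  have hJ' : (1 - Pm (R := R) p) * Qm' p h * (1 + Pm p) = 0 :=
    transfer (Pm p) (Qm p B) (Qm' p h) (Pm_sq p) (Qm_mul_Qm' p B h hBh) hJ hZ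
  have expand : (1 - Pm (R := R) p) * Qm' p h * (1 + Pm p)
      = Qm' p h + Qm' p h * Pm p - Pm p * Qm' p h - Pm p * Qm' p h * Pm p := by
    rw [sub_mul, one_mul, mul_add, mul_one, sub_mul]
    abel
  rw [expand] at hJ'
  have e0 := congrFun (congrFun hJ' (i, j)) (k, l)
  simp only [Matrix.sub_apply, Matrix.add_apply, Matrix.zero_apply] at e0
  rw [Pm_mul, mul_Pm, mul_Pm p (Pm p * Qm' p h), Pm_mul] at e0
  simp only [Qm', Matrix.of_apply, smul_smul, ← sgnZ_add] at e0
  exact e0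


end Op

section Z0
variable {T : Type*} [Ring T] [Algebra ℂ T]

theorem z0_unit (P D : T) (hP : P * P = 1) (hD : D * D = 1) (hPD : P * D = D * P) :
    IsUnit ((1 - P) * D * (1 - P) + ((1 + P) + (1 + P))) := by
  have h1 : P * (D * P) = D := by rw [← mul_assoc, hPD, mul_assoc, hP, mul_one]
  have h2 : D * (D * P) = P := by rw [← mul_assoc, hD, one_mul]
  have h3 : (D * P) * P = D := by rw [mul_assoc, hP, mul_one]
  have h4 : (D * P) * D = P := by rw [mul_assoc, hPD, ← mul_assoc, hD, one_mul]
  have h5 : (D * P) * (D * P) = 1 := by rw [← mul_assoc, h4, hP]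
  set u : T := 1 + P + D - D * P with hu
  have key : ((1 - P) * D * (1 - P) + ((1 + P) + (1 + P))) = u + u := by
    rw [mul_sub, mul_one, sub_mul, sub_mul, one_mul, mul_assoc, h1, hu, hPD]
    abel
  rw [key]
  have hPu : P * u = P + 1 + D * P - D := by
    rw [hu, mul_sub, mul_add, mul_add, mul_one, hP, h1, hPD]
  have hDu : D * u = D + D * P + 1 - P := by
    rw [hu, mul_sub, mul_add, mul_add, mul_one, hD, h2]
  have hDPu : (D * P) * u = D * P + D + P - 1 := by
    rw [hu, mul_sub, mul_add, mul_add, mul_one, h3, h4, h5]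
  have huu : u * u = 4 := by
    calc u * u = (1 + P + D - D * P) * u := by rw [hu]
      _ = u + P * u + D * u - (D * P) * u := by
          rw [sub_mul, add_mul, add_mul, one_mul]
      _ = u + (P + 1 + D * P - D) + (D + D * P + 1 - P) - (D * P + D + P - 1) := by
          rw [hPu, hDu, hDPu]
      _ = 1 + 1 + (1 + 1) := by rw [hu]; abel
      _ = 4 := by norm_num
  have hsq : (u + u) * (u + u) = 16 := by
    rw [add_mul, mul_add, huu]
    norm_num
  refine ⟨⟨u + u, (16⁻¹ : ℂ) • (u + u), ?_, ?_⟩, rfl⟩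
  · rw [mul_smul_comm, hsq]
    rw [show (16 : T) = algebraMap ℂ T 16 by rw [map_ofNat], Algebra.smul_def, ← map_mul]
    norm_num
  · rw [smul_mul_assoc, hsq]
    rw [show (16 : T) = algebraMap ℂ T 16 by rw [map_ofNat], Algebra.smul_def, ← map_mul]
    norm_num

end Z0

section ZPS
variable {A : Type*} [Ring A] [Algebra ℂ A] {κ : ℕ} (p : Fin κ → ZMod 2)

theorem cc0_add {n : Type*} [Fintype n] [DecidableEq n]
    (U V : Matrix n n (PowerSeries A)) : cc0 (U + V) = cc0 U + cc0 V := by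
  ext i j
  simp [cc0]

theorem cc0_sub {n : Type*} [Fintype n] [DecidableEq n]
    (U V : Matrix n n (PowerSeries A)) : cc0 (U - V) = cc0 U - cc0 V := by
  ext i j
  simp [cc0]

/-- diagonal sign matrix -/
def Dm : Matrix (Fin κ × Fin κ) (Fin κ × Fin κ) A :=
  Matrix.diagonal fun x => ((sgnZ (p x.1 * p x.2) : ℤ) : A)

theorem Dm_sq : Dm (A := A) p * Dm p = 1 := by
  rw [Dm, Matrix.diagonal_mul_diagonal]
  simp only [← Int.cast_mul, sgnZ_sq, Int.cast_one, Matrix.diagonal_one]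

theorem Pm_Dm_comm : Pm (R := A) p * Dm p = Dm p * Pm p := by
  ext x y
  rw [Dm, Matrix.mul_diagonal, Matrix.diagonal_mul]
  simp only [Pm, Matrix.of_apply]
  by_cases hc : x.1 = y.2 ∧ x.2 = y.1
  · rw [if_pos hc, hc.1, hc.2, mul_comm (p y.2) (p y.1)]
  · rw [if_neg hc, zero_mul, mul_zero]

theorem cc0_Pm : cc0 (Pm (R := PowerSeries A) p) = Pm (R := A) p := by
  ext x y
  simp only [cc0, Pm, Matrix.of_apply]
  rw [apply_ite (PowerSeries.constantCoeff), map_intCast, map_zero]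

theorem cc0_Qm (B : Matrix (Fin κ) (Fin κ) (PowerSeries A)) (haff : cc0 B = 1) :
    cc0 (Qm p B) = Dm (A := A) p := by
  ext x y
  simp only [cc0, Qm, Matrix.of_apply]
  rw [map_zsmul, map_mul]
  have e1 : PowerSeries.constantCoeff (B x.1 y.1) = (1 : Matrix (Fin κ) (Fin κ) A) x.1 y.1 := by
    rw [← haff]; simp [cc0]
  have e2 : PowerSeries.constantCoeff (B x.2 y.2) = (1 : Matrix (Fin κ) (Fin κ) A) x.2 y.2 := by
    rw [← haff]; simp [cc0]
  rw [e1, e2, Matrix.one_apply, Matrix.one_apply, Dm, Matrix.diagonal_apply]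
  by_cases h1 : x = y
  · subst h1
    rw [if_pos rfl, if_pos rfl, if_pos rfl, mul_one, mul_comm (p x.2)]
    rw [← Int.cast_smul_eq_zsmul A, smul_eq_mul, mul_one]
  · rw [if_neg h1]
    by_cases h2 : x.1 = y.1
    · have h3 : ¬ x.2 = y.2 := fun hc => h1 (Prod.ext h2 hc)
      rw [if_pos h2, if_neg h3, one_mul, smul_zero]
    · rw [if_neg h2, zero_mul, smul_zero]

theorem bigZ_unit (B : Matrix (Fin κ) (Fin κ) (PowerSeries A)) (haff : cc0 B = 1) :
    IsUnit ((1 - Pm (R := PowerSeries A) p) * Qm p B * (1 - Pm p)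
      + ((1 + Pm p) + (1 + Pm p))) := by
  apply isUnit_of_cc0
  simp only [cc0_add, cc0_sub, cc0_mul, cc0_one, cc0_Pm, cc0_Qm p B haff]
  exact z0_unit (Pm p) (Dm p) (Pm_sq p) (Dm_sq p) (Pm_Dm_comm p)

end ZPS

theorem isUnit_two' {R : Type*} [Ring R] (a b : R) (h1 : a * b = 1) (h2 : b * a = 1) :
    IsUnit a := ⟨⟨a,b,h1,h2⟩, rfl⟩

theorem ring_inverse_eq' {R : Type*} [Ring R] (a b : R) (h1 : a * b = 1) (h2 : b * a = 1) :
    Ring.inverse a = b := by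
  have ha : IsUnit a := ⟨⟨a,b,h1,h2⟩, rfl⟩
  calc Ring.inverse a = Ring.inverse a * (a * b) := by rw [h1, mul_one]
  _ = b := by rw [← mul_assoc, Ring.inverse_mul_cancel _ ha, one_mul]

theorem inv_mul_inv' {R : Type*} [Ring R] (a b : R) (ha : IsUnit a) (hb : IsUnit b) :
    Ring.inverse a * Ring.inverse b = Ring.inverse (b * a) := by
  refine (ring_inverse_eq' _ _ ?_ ?_).symm
  · rw [mul_assoc, ← mul_assoc a, Ring.mul_inverse_cancel _ ha, one_mul,
      Ring.mul_inverse_cancel _ hb]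
  · rw [mul_assoc, ← mul_assoc (Ring.inverse b), Ring.inverse_mul_cancel _ hb, one_mul,
      Ring.inverse_mul_cancel _ ha]

section Cases
variable {R : Type*} [Ring R] (x y z w : R)

theorem caseA (hx : IsUnit x) (hw : IsUnit w)
    (hS : IsUnit (x - y * Ring.inverse w * z)) (hT : IsUnit (w - z * Ring.inverse x * y))
    (hwy : w * y = y * w) (hxz : x * z = z * x)
    (hc : w * x - x * w = y * z - z * y) :
    Ring.inverse (x - y * Ring.inverse w * z) * Ring.inverse w
      = Ring.inverse (w - z * Ring.inverse x * y) * Ring.inverse x := by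
  rw [inv_mul_inv' _ _ hS hw, inv_mul_inv' _ _ hT hx]
  congr 1
  have e1 : w * (y * Ring.inverse w * z) = y * z := by
    rw [← mul_assoc, ← mul_assoc, hwy, mul_assoc y, Ring.mul_inverse_cancel _ hw, mul_one]
  have e2 : x * (z * Ring.inverse x * y) = z * y := by
    rw [← mul_assoc, ← mul_assoc, hxz, mul_assoc z, Ring.mul_inverse_cancel _ hx, mul_one]
  rw [mul_sub, mul_sub, e1, e2, sub_eq_sub_iff_sub_eq_sub]
  exact hc

theorem caseD (hx : IsUnit x) (hw : IsUnit w)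
    (hzw : z * w = w * z) (hxy : x * y = y * x)
    (hc : x * w - w * x = y * z - z * y) :
    (x - y * Ring.inverse w * z) * w = (w - z * Ring.inverse x * y) * x := by
  have e1 : y * Ring.inverse w * z * w = y * z := by
    rw [mul_assoc, hzw, ← mul_assoc, mul_assoc y, Ring.inverse_mul_cancel _ hw, mul_one]
  have e2 : z * Ring.inverse x * y * x = z * y := by
    rw [mul_assoc, ← hxy, ← mul_assoc, mul_assoc z, Ring.inverse_mul_cancel _ hx, mul_one]
  rw [sub_mul, sub_mul, e1, e2, sub_eq_sub_iff_sub_eq_sub]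
  exact hc

theorem caseB (hx : IsUnit x) (hw : IsUnit w)
    (hS : IsUnit (x - y * Ring.inverse w * z))
    (hxz : x * z = z * x) (hzw : z * w = w * z) (hz2 : z * z = 0)
    (hc : x * w - w * x = z * y + y * z) :
    Ring.inverse (x - y * Ring.inverse w * z) * w
      = (w - z * Ring.inverse x * y) * Ring.inverse x := by
  set S : R := x - y * Ring.inverse w * z with hSdef
  set T : R := w - z * Ring.inverse x * y with hTdef
  have hST : S * T = w * x := by
    rw [hSdef, hTdef, sub_mul, mul_sub, mul_sub]
    have e2 : x * (z * Ring.inverse x * y) = z * y := by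
      rw [← mul_assoc, ← mul_assoc, hxz, mul_assoc z, Ring.mul_inverse_cancel _ hx, mul_one]
    have e3 : y * Ring.inverse w * z * w = y * z := by
      rw [mul_assoc, hzw, ← mul_assoc, mul_assoc y, Ring.inverse_mul_cancel _ hw, mul_one]
    have e4 : y * Ring.inverse w * z * (z * Ring.inverse x * y) = 0 := by
      rw [mul_assoc (y * Ring.inverse w) z, ← mul_assoc z (z * Ring.inverse x), ← mul_assoc z z,
        hz2, zero_mul, zero_mul, mul_zero]
    rw [e2, e3, e4, sub_zero]
    have : x * w - z * y - y * z = x * w - (z * y + y * z) := by abel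
    rw [this, ← hc]
    abel
  have hw' : S * (T * Ring.inverse x) = w := by
    rw [← mul_assoc, hST, mul_assoc, Ring.mul_inverse_cancel _ hx, mul_one]
  calc Ring.inverse S * w = Ring.inverse S * (S * (T * Ring.inverse x)) := by rw [hw']
    _ = T * Ring.inverse x := by rw [← mul_assoc, Ring.inverse_mul_cancel _ hS, one_mul]

theorem caseC (hx : IsUnit x) (hw : IsUnit w)
    (hT : IsUnit (w - z * Ring.inverse x * y))
    (hwy : w * y = y * w) (hxy : x * y = y * x) (hy2 : y * y = 0)
    (hc : w * x - x * w = z * y + y * z) :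
    (x - y * Ring.inverse w * z) * Ring.inverse w
      = Ring.inverse (w - z * Ring.inverse x * y) * x := by
  set S : R := x - y * Ring.inverse w * z with hSdef
  set T : R := w - z * Ring.inverse x * y with hTdef
  have hTS : T * S = x * w := by
    rw [hSdef, hTdef, sub_mul, mul_sub, mul_sub]
    have e2 : w * (y * Ring.inverse w * z) = y * z := by
      rw [← mul_assoc, ← mul_assoc, hwy, mul_assoc y, Ring.mul_inverse_cancel _ hw, mul_one]
    have e3 : z * Ring.inverse x * y * x = z * y := by
      rw [mul_assoc, ← hxy, ← mul_assoc, mul_assoc z, Ring.inverse_mul_cancel _ hx, mul_one]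
    have e4 : z * Ring.inverse x * y * (y * Ring.inverse w * z) = 0 := by
      rw [mul_assoc (z * Ring.inverse x) y, ← mul_assoc y (y * Ring.inverse w), ← mul_assoc y y,
        hy2, zero_mul, zero_mul, mul_zero]
    rw [e2, e3, e4, sub_zero]
    have : w * x - y * z - z * y = w * x - (z * y + y * z) := by abel
    rw [this, ← hc]
    abel
  have hx' : T * (S * Ring.inverse w) = x := by
    rw [← mul_assoc, hTS, mul_assoc, Ring.mul_inverse_cancel _ hw, mul_one]
  calc S * Ring.inverse w = Ring.inverse T * (T * (S * Ring.inverse w)) := by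
        rw [← mul_assoc, Ring.inverse_mul_cancel _ hT, one_mul]
    _ = Ring.inverse T * x := by rw [hx']

end Cases

section Half
variable {M : Type*} [AddCommGroup M] [Module ℂ M]

theorem half (u : M) (h : u + u = 0) : u = 0 := by
  have h2 : (2 : ℂ) • u = 0 := by rw [two_smul]; exact h
  calc u = (2⁻¹ : ℂ) • ((2 : ℂ) • u) := by rw [smul_smul]; norm_num
    _ = 0 := by rw [h2, smul_zero]

theorem quarter (u : M) (h : u + u + u + u = 0) : u = 0 := by
  have h2 : (u + u) + (u + u) = 0 := by rw [← h]; abel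
  exact half u (half (u + u) h2)

end Half


theorem ZM2 : (1 + 1 : ZMod 2) = 0 := rfl
theorem sgn_zero : sgnZ 0 = 1 := rfl
theorem sgn_one : sgnZ (1 : ZMod 2) = -1 := by decide
theorem pexp_one {R : Type*} [Ring R] (x : R) : pexp x 1 = x := if_pos rfl
theorem pexp_neg {R : Type*} [Ring R] (x : R) : pexp x (-1) = Ring.inverse x :=
  if_neg (by norm_num)

section Middle
variable {A : Type*} [Ring A] [Algebra ℂ A] {κ : ℕ}

theorem middle (p : Fin κ → ZMod 2) (B : Matrix (Fin κ) (Fin κ) (PowerSeries A))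
    (haff : cc0 B = 1)
    (hrel : ∀ i j k l, scomm (p i + p j) (p k + p l) (B i j) (B k l) =
      sgnZ (p i * p j + p i * p k + p j * p k) • scomm (p k + p j) (p i + p l) (B k j) (B i l))
    (r t : Fin κ) (hrt : r ≠ t) (sr st : ℤ)
    (hsr : sr = 1 ∨ sr = -1) (hst : st = 1 ∨ st = -1)
    (hpr : p r = if sr = 1 then 0 else 1) (hpt : p t = if st = 1 then 0 else 1) :
    pexp (Ring.inverse (Ring.inverse B r r -
        Ring.inverse B r t * Ring.inverse (Ring.inverse B t t) * Ring.inverse B t r)) sr *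
      pexp (Ring.inverse (Ring.inverse B t t)) st =
    pexp (Ring.inverse (Ring.inverse B t t -
        Ring.inverse B t r * Ring.inverse (Ring.inverse B r r) * Ring.inverse B r t)) st *
      pexp (Ring.inverse (Ring.inverse B r r)) sr := by
  have hBu : IsUnit B := isUnit_of_cc0 B (by rw [haff]; exact isUnit_one)
  have hcch : cc0 (Ring.inverse B) = 1 := by
    rw [cc0_inverse B (by rw [haff]; exact isUnit_one), haff, Ring.inverse_one]
  have centry : ∀ i j : Fin κ, PowerSeries.constantCoeff (Ring.inverse B i j)
      = (1 : Matrix (Fin κ) (Fin κ) A) i j := by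
    intro i j
    rw [← hcch]
    simp [cc0]
  have hx : IsUnit (Ring.inverse B r r) := by
    rw [PowerSeries.isUnit_iff_constantCoeff, centry, Matrix.one_apply_eq]
    exact isUnit_one
  have hw : IsUnit (Ring.inverse B t t) := by
    rw [PowerSeries.isUnit_iff_constantCoeff, centry, Matrix.one_apply_eq]
    exact isUnit_one
  have hS : IsUnit (Ring.inverse B r r -
      Ring.inverse B r t * Ring.inverse (Ring.inverse B t t) * Ring.inverse B t r) := by
    rw [PowerSeries.isUnit_iff_constantCoeff, map_sub, map_mul, map_mul, centry, centry,
      centry, Matrix.one_apply_eq, Matrix.one_apply_ne hrt, Matrix.one_apply_ne (Ne.symm hrt),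
      zero_mul, zero_mul, sub_zero]
    exact isUnit_one
  have hT : IsUnit (Ring.inverse B t t -
      Ring.inverse B t r * Ring.inverse (Ring.inverse B r r) * Ring.inverse B r t) := by
    rw [PowerSeries.isUnit_iff_constantCoeff, map_sub, map_mul, map_mul, centry, centry,
      centry, Matrix.one_apply_eq, Matrix.one_apply_ne hrt, Matrix.one_apply_ne (Ne.symm hrt),
      zero_mul, mul_zero, sub_zero]
    exact isUnit_one
  have RELH := relh p B hrel hBu (bigZ_unit p B haff)
  rcases hsr with rfl | rfl <;> rcases hst with rfl | rfl <;>
    norm_num at hpr hpt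
  -- case (1,1)
  · rw [pexp_one, pexp_one, pexp_one, pexp_one]
    have E1 := RELH r t t t
    have E2 := RELH t r r r
    have E3 := RELH r t r t
    set x := Ring.inverse B r r with hxd
    set y := Ring.inverse B r t with hyd
    set z := Ring.inverse B t r with hzd
    set w := Ring.inverse B t t with hwd
    simp only [hpr, hpt, mul_zero, zero_mul, mul_one, one_mul, add_zero, zero_add, ZM2,
      sgn_zero, sgn_one, one_smul, neg_smul, neg_neg, sub_neg_eq_add] at E1 E2 E3
    have hwy : w * y = y * w := by
      apply sub_eq_zero.mp
      apply half (w * y - y * w)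
      calc (w * y - y * w) + (w * y - y * w) = w * y + w * y - y * w - y * w := by abel
        _ = 0 := E1
    have hxz : x * z = z * x := by
      apply sub_eq_zero.mp
      apply half (x * z - z * x)
      calc (x * z - z * x) + (x * z - z * x) = x * z + x * z - z * x - z * x := by abel
        _ = 0 := E2
    have hc : w * x - x * w = y * z - z * y := by
      have : (w * x - x * w) - (y * z - z * y) = w * x + z * y - y * z - x * w := by abel
      apply sub_eq_zero.mp
      rw [this]
      exact E3
    exact caseA x y z w hx hw hS hT hwy hxz hc
  -- case (1,-1)
  · rw [pexp_one, pexp_neg, pexp_neg, pexp_one, ring_inverse_inverse _ hw,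
      ring_inverse_inverse _ hT]
    have E2 := RELH t r r r
    have E5 := RELH t t t r
    have E6 := RELH t t r r
    have E3 := RELH r t r t
    set x := Ring.inverse B r r with hxd
    set y := Ring.inverse B r t with hyd
    set z := Ring.inverse B t r with hzd
    set w := Ring.inverse B t t with hwd
    simp only [hpr, hpt, mul_zero, zero_mul, mul_one, one_mul, add_zero, zero_add, ZM2,
      sgn_zero, sgn_one, one_smul, neg_smul, neg_neg, sub_neg_eq_add] at E2 E5 E6 E3
    have hxz : x * z = z * x := by
      apply sub_eq_zero.mp
      apply half (x * z - z * x)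
      rw [← E2]; abel
    have hzw : z * w = w * z := by
      apply sub_eq_zero.mp
      apply half (z * w - w * z)
      rw [← E5]; abel
    have hz2 : z * z = 0 := by
      apply quarter (z * z)
      rw [← E6]
    have hc : x * w - w * x = z * y + y * z := by
      refine (sub_eq_zero.mp ?_).symm
      rw [← E3]; abel
    exact caseB x y z w hx hw hS hxz hzw hz2 hc
  -- case (-1,1)
  · rw [pexp_neg, pexp_one, pexp_one, pexp_neg, ring_inverse_inverse _ hS,
      ring_inverse_inverse _ hx]
    have E1 := RELH r t t t
    have E7 := RELH r r r t
    have E8 := RELH r r t t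
    have E3 := RELH r t r t
    set x := Ring.inverse B r r with hxd
    set y := Ring.inverse B r t with hyd
    set z := Ring.inverse B t r with hzd
    set w := Ring.inverse B t t with hwd
    simp only [hpr, hpt, mul_zero, zero_mul, mul_one, one_mul, add_zero, zero_add, ZM2,
      sgn_zero, sgn_one, one_smul, neg_smul, neg_neg, sub_neg_eq_add] at E1 E7 E8 E3
    have hwy : w * y = y * w := by
      apply sub_eq_zero.mp
      apply half (w * y - y * w)
      rw [← E1]; abel
    have hxy : x * y = y * x := by
      refine (sub_eq_zero.mp (half (y * x - x * y) ?_)).symm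
      rw [← E7]; abel
    have hy2 : y * y = 0 := by
      apply quarter (y * y)
      rw [← E8]
    have hc : w * x - x * w = z * y + y * z := by
      apply sub_eq_zero.mp
      rw [← E3]; abel
    exact caseC x y z w hx hw hT hwy hxy hy2 hc
  -- case (-1,-1)
  · rw [pexp_neg, pexp_neg, pexp_neg, pexp_neg, ring_inverse_inverse _ hS,
      ring_inverse_inverse _ hw, ring_inverse_inverse _ hT, ring_inverse_inverse _ hx]
    have E9 := RELH t t t r
    have E7 := RELH r r r t
    have E3 := RELH r t r t
    set x := Ring.inverse B r r with hxd
    set y := Ring.inverse B r t with hyd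
    set z := Ring.inverse B t r with hzd
    set w := Ring.inverse B t t with hwd
    simp only [hpr, hpt, mul_zero, zero_mul, mul_one, one_mul, add_zero, zero_add, ZM2,
      sgn_zero, sgn_one, one_smul, neg_smul, neg_neg, sub_neg_eq_add] at E9 E7 E3
    have hzw : z * w = w * z := by
      refine (sub_eq_zero.mp (half (w * z - z * w) ?_)).symm
      rw [← E9]; abel
    have hxy : x * y = y * x := by
      apply sub_eq_zero.mp
      apply half (x * y - y * x)
      rw [← E7]; abel
    have hc : x * w - w * x = y * z - z * y := by
      apply sub_eq_zero.mp
      rw [← E3]; abel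
    exact caseD x y z w hx hw hzw hxy hc

end Middle



theorem mem_take_finRange {N : ℕ} (a : ℕ) (x : Fin N)
    (hx : x ∈ (List.finRange N).take a) : (x : ℕ) < a := by
  rcases List.mem_iff_getElem.mp hx with ⟨i, hi, rfl⟩
  rw [List.getElem_take]
  have hia : i < a := by
    have := hi
    simp [List.length_take, List.length_finRange] at this
    exact this.1
  simp [List.getElem_finRange]
  omega

theorem mem_drop_finRange {N : ℕ} (a : ℕ) (x : Fin N)
    (hx : x ∈ (List.finRange N).drop a) : a ≤ (x : ℕ) := by
  rcases List.mem_iff_getElem.mp hx with ⟨i, hi, rfl⟩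
  rw [List.getElem_drop]
  simp [List.getElem_finRange]

theorem listProd_split {R : Type*} [Ring R] {N : ℕ} (f : Fin N → R) (a : ℕ) (h : a + 1 < N) :
    listProd f = (((List.finRange N).take a).map f).prod *
      (f ⟨a, by omega⟩ * (f ⟨a+1, h⟩ * (((List.finRange N).drop (a+2)).map f).prod)) := by
  rw [listProd]
  have hlen : (List.finRange N).length = N := List.length_finRange
  have h1 : List.finRange N = (List.finRange N).take a ++ (List.finRange N).drop a :=
    (List.take_append_drop a _).symm
  have h2 : (List.finRange N).drop a = ⟨a, by omega⟩ :: (List.finRange N).drop (a+1) := by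
    rw [List.drop_eq_getElem_cons (by omega)]
    congr 1
    simp [List.getElem_finRange]
  have h3 : (List.finRange N).drop (a+1) = ⟨a+1, h⟩ :: (List.finRange N).drop (a+2) := by
    rw [List.drop_eq_getElem_cons (by omega)]
    congr 1
    simp [List.getElem_finRange]
  conv_lhs => rw [h1, h2, h3]
  rw [List.map_append, List.prod_append, List.map_cons, List.map_cons, List.prod_cons,
    List.prod_cons]

theorem listProd_surgery {R : Type*} [Ring R] {N : ℕ} (f g : Fin N → R) (a : ℕ)
    (ha : a + 1 < N)
    (heq : ∀ i : Fin N, (i : ℕ) ≠ a → (i : ℕ) ≠ a + 1 → f i = g i)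
    (hpair : f ⟨a, by omega⟩ * f ⟨a+1, ha⟩ = g ⟨a, by omega⟩ * g ⟨a+1, ha⟩) :
    listProd f = listProd g := by
  rw [listProd_split f a ha, listProd_split g a ha]
  have e1 : ((List.finRange N).take a).map f = ((List.finRange N).take a).map g := by
    apply List.map_congr_left
    intro x hx
    have := mem_take_finRange a x hx
    exact heq x (by omega) (by omega)
  have e2 : ((List.finRange N).drop (a+2)).map f = ((List.finRange N).drop (a+2)).map g := by
    apply List.map_congr_left
    intro x hx
    have := mem_drop_finRange (a+2) x hx
    exact heq x (by omega) (by omega)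
  rw [e1, e2]
  congr 1
  rw [← mul_assoc, ← mul_assoc, hpair]


section ADJ
variable {A : Type*} [Ring A] [Algebra ℂ A]

theorem inv_cc {n : Type*} [Fintype n] [DecidableEq n]
    (B : Matrix n n (PowerSeries A)) (haff : cc0 B = 1) :
    cc0 (Ring.inverse B) = 1 := by
  rw [cc0_inverse B (by rw [haff]; exact isUnit_one), haff, Ring.inverse_one]

theorem centry' {n : Type*} [Fintype n] [DecidableEq n]
    (B : Matrix n n (PowerSeries A)) (haff : cc0 B = 1) (i j : n) :
    PowerSeries.constantCoeff (Ring.inverse B i j) = (1 : Matrix n n A) i j := by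
  rw [← inv_cc B haff]
  simp [cc0]

theorem diag_unit {n : Type*} [Fintype n] [DecidableEq n]
    (B : Matrix n n (PowerSeries A)) (haff : cc0 B = 1) (i : n) :
    IsUnit (Ring.inverse B i i) := by
  rw [PowerSeries.isUnit_iff_constantCoeff, centry' B haff, Matrix.one_apply_eq]
  exact isUnit_one

theorem leadSub_cc {N : ℕ} (M : Matrix (Fin N) (Fin N) (PowerSeries A))
    (haff : IsAffine M) (i : Fin N) : cc0 (leadSub M i) = 1 := by
  ext a b
  simp only [cc0, Matrix.of_apply, leadSub, Matrix.submatrix_apply,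
    ← PowerSeries.coeff_zero_eq_constantCoeff_apply]
  rw [haff]
  rw [Matrix.one_apply]
  by_cases hab : a = b
  · subst hab
    rw [if_pos rfl, if_pos rfl]
  · rw [if_neg hab, if_neg (fun hc => hab (Fin.castLE_injective _ hc))]

theorem leadSub_unit {N : ℕ} (M : Matrix (Fin N) (Fin N) (PowerSeries A))
    (haff : IsAffine M) (i : Fin N) : IsUnit (leadSub M i) :=
  isUnit_of_cc0 _ (by rw [leadSub_cc M haff i]; exact isUnit_one)

theorem castLE_swap {n N : ℕ} (h : n ≤ N) (u v x : Fin n) :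
    Fin.castLE h (Equiv.swap u v x)
      = Equiv.swap (Fin.castLE h u) (Fin.castLE h v) (Fin.castLE h x) :=
  ((Fin.castLE_injective h).swap_apply u v x).symm

/-- the leading `(k+1)`-block as a sub-block of the leading `(k+2)`-block -/
theorem leadSub_peel {N : ℕ} (M : Matrix (Fin N) (Fin N) (PowerSeries A))
    (k : ℕ) (hk : k + 1 < N) :
    leadSub M ⟨k, by omega⟩ =
      Matrix.of fun i j : Fin (k+1) =>
        leadSub M ⟨k+1, hk⟩ i.castSucc j.castSucc := by
  ext a b
  simp only [leadSub, Matrix.submatrix_apply, Matrix.of_apply]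
  congr 1 <;> exact Fin.ext (by simp)

theorem adj {N : ℕ} (g : ZMod 2 → Submodule ℂ A) (s : Fin N → ℤ) (hs : IsParitySeq s)
    (M : Matrix (Fin N) (Fin N) (PowerSeries A)) (haff : IsAffine M)
    (hM : IsManin (gPS g) s M) (k : ℕ) (hk : k + 1 < N) :
    berPar s M = berPar (fun i => s (Equiv.swap ⟨k, by omega⟩ ⟨k+1, hk⟩ i))
      (M.submatrix (Equiv.swap (⟨k, by omega⟩ : Fin N) ⟨k+1, hk⟩)
        (Equiv.swap (⟨k, by omega⟩ : Fin N) ⟨k+1, hk⟩)) := by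
  set a : Fin N := ⟨k, by omega⟩ with hadef
  set b : Fin N := ⟨k+1, hk⟩ with hbdef
  set τ := Equiv.swap a b with hτ
  set M' := M.submatrix τ τ with hM'
  rw [berPar, berPar]
  apply listProd_surgery _ _ k hk
  -- entries away from k, k+1
  · intro i hi1 hi2
    have hτi : τ i = i := by
      rw [hτ]
      apply Equiv.swap_apply_of_ne_of_ne
      · exact fun hc => hi1 (by rw [hc])
      · exact fun hc => hi2 (by rw [hc])
    rw [hτi]
    congr 1
    -- dQM M i = dQM M' i
    rcases lt_or_gt_of_ne (fun hc : (i : ℕ) = k => hi1 hc) with hlt | hgt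
    · -- i.val < k : leading submatrices agree
      have : leadSub M' i = leadSub M i := by
        ext x y
        simp only [leadSub, Matrix.submatrix_apply, hM']
        have fx : τ (Fin.castLE i.isLt x) = Fin.castLE i.isLt x := by
          apply Equiv.swap_apply_of_ne_of_ne <;>
            exact fun hc => by
              have := congrArg Fin.val hc
              simp [hadef, hbdef] at this
              omega
        have fy : τ (Fin.castLE i.isLt y) = Fin.castLE i.isLt y := by
          apply Equiv.swap_apply_of_ne_of_ne <;>
            exact fun hc => by
              have := congrArg Fin.val hc
              simp [hadef, hbdef] at this
              omega
        rw [fx, fy]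
      rw [dQM, dQM, this]
    · -- i.val > k+1
      have hki : k + 1 < (i : ℕ) := by omega
      set τ' := Equiv.swap (⟨k, by omega⟩ : Fin ((i : ℕ)+1)) ⟨k+1, by omega⟩ with hτ'
      have hsub : leadSub M' i = (leadSub M i).submatrix τ' τ' := by
        ext x y
        simp only [leadSub, Matrix.submatrix_apply, hM']
        have key : ∀ z : Fin ((i : ℕ)+1),
            τ (Fin.castLE i.isLt z) = Fin.castLE i.isLt (τ' z) := by
          intro z
          rw [hτ', castLE_swap]
          congr 1 <;> exact Fin.ext (by simp [hadef, hbdef])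
        rw [key, key]
      have hunit := leadSub_unit M haff i
      rw [dQM, dQM, hsub, (subinv _ hunit τ').2]
      have hfix : τ' (Fin.last (i : ℕ)) = Fin.last (i : ℕ) := by
        apply Equiv.swap_apply_of_ne_of_ne <;>
          exact fun hc => by
            have := congrArg Fin.val hc
            simp [Fin.last] at this
            omega
      rw [Matrix.submatrix_apply, hfix]
  -- the crucial pair at positions k, k+1
  · have hτa : τ ⟨k, by omega⟩ = b := by rw [hτ, ← hadef]; exact Equiv.swap_apply_left a b
    have hτb : τ ⟨k+1, hk⟩ = a := by rw [hτ, ← hbdef]; exact Equiv.swap_apply_right a b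
    rw [hτa, hτb]
    -- set up the (k+2) block
    set B := leadSub M ⟨k+1, hk⟩ with hB
    have haffB : cc0 B = 1 := leadSub_cc M haff _
    have hBu : IsUnit B := leadSub_unit M haff _
    set h : Matrix (Fin (k+2)) (Fin (k+2)) (PowerSeries A) := Ring.inverse B with hh
    set r : Fin (k+2) := (Fin.last k).castSucc with hrdef
    set t : Fin (k+2) := Fin.last (k+1) with htdef
    have hrt : r ≠ t := by
      intro hc
      have := congrArg Fin.val hc
      simp [hrdef, htdef, Fin.last] at this
    have hwu : IsUnit (h t t) := diag_unit B haffB t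
    have hxu : IsUnit (h r r) := diag_unit B haffB r
    -- identify all four quasiminors
    have d1 : dQM M ⟨k+1, hk⟩ = Ring.inverse (h t t) := rfl
    have d2 : dQM M ⟨k, by omega⟩ =
        Ring.inverse (h r r - h r t * Ring.inverse (h t t) * h t r) := by
      rw [dQM, leadSub_peel M k hk, ← hB, (peel B hBu hwu).2]
      rfl
    set τ'' := Equiv.swap r t with hτ''
    have hcast : ∀ z : Fin (k+2),
        τ (Fin.castLE hk z) = Fin.castLE hk (τ'' z) := by
      intro z
      rw [hτ'', castLE_swap]
      congr 1 <;> exact Fin.ext (by simp [hadef, hbdef, hrdef, htdef, Fin.last])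
    have hsub : leadSub M' ⟨k+1, hk⟩ = B.submatrix τ'' τ'' := by
      ext x y
      simp only [leadSub, Matrix.submatrix_apply, hM', hB]
      rw [hcast, hcast]
    have hinv' : Ring.inverse (B.submatrix τ'' τ'') = h.submatrix τ'' τ'' :=
      (subinv B hBu τ'').2
    have hτ''t : τ'' t = r := Equiv.swap_apply_right r t
    have hτ''r : τ'' r = t := Equiv.swap_apply_left r t
    have d3 : dQM M' ⟨k+1, hk⟩ = Ring.inverse (h r r) := by
      rw [dQM, hsub, hinv']
      show Ring.inverse (h.submatrix τ'' τ'' t t) = _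
      rw [Matrix.submatrix_apply, hτ''t]
    have hBsu : IsUnit (B.submatrix τ'' τ'') := (subinv B hBu τ'').1
    have hwu' : IsUnit (Ring.inverse (B.submatrix τ'' τ'') t t) := by
      rw [hinv', Matrix.submatrix_apply, hτ''t]
      exact hxu
    have d4 : dQM M' ⟨k, by omega⟩ =
        Ring.inverse (h t t - h t r * Ring.inverse (h r r) * h r t) := by
      rw [dQM, leadSub_peel M' k hk, hsub, (peel _ hBsu hwu').2]
      show Ring.inverse ((Ring.inverse (B.submatrix τ'' τ'')) r r -
        (Ring.inverse (B.submatrix τ'' τ'')) r t *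
          Ring.inverse ((Ring.inverse (B.submatrix τ'' τ'')) t t) *
          (Ring.inverse (B.submatrix τ'' τ'')) t r) = _
      rw [hinv']
      simp only [Matrix.submatrix_apply, hτ''t, hτ''r]
    rw [d1, d2, d3, d4]
    -- apply the middle identity
    have hrel : ∀ i j p q : Fin (k+2),
        scomm ((fun e => pdeg s (Fin.castLE hk e)) i + (fun e => pdeg s (Fin.castLE hk e)) j)
          ((fun e => pdeg s (Fin.castLE hk e)) p + (fun e => pdeg s (Fin.castLE hk e)) q)
          (B i j) (B p q) =
        sgnZ ((fun e => pdeg s (Fin.castLE hk e)) i * (fun e => pdeg s (Fin.castLE hk e)) j +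
            (fun e => pdeg s (Fin.castLE hk e)) i * (fun e => pdeg s (Fin.castLE hk e)) p +
            (fun e => pdeg s (Fin.castLE hk e)) j * (fun e => pdeg s (Fin.castLE hk e)) p) •
          scomm ((fun e => pdeg s (Fin.castLE hk e)) p + (fun e => pdeg s (Fin.castLE hk e)) j)
            ((fun e => pdeg s (Fin.castLE hk e)) i + (fun e => pdeg s (Fin.castLE hk e)) q)
            (B p j) (B i q) := by
      intro i j p q
      exact hM.2 (Fin.castLE hk i) (Fin.castLE hk j) (Fin.castLE hk p) (Fin.castLE hk q)
    have hra : Fin.castLE hk r = a := Fin.ext (by simp [hrdef, hadef, Fin.last])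
    have htb : Fin.castLE hk t = b := Fin.ext (by simp [htdef, hbdef, Fin.last])
    have hmid := middle (fun e => pdeg s (Fin.castLE hk e)) B haffB hrel r t hrt
      (s a) (s b) (hs a) (hs b)
      (by show pdeg s (Fin.castLE hk r) = _; rw [hra]; rfl)
      (by show pdeg s (Fin.castLE hk t) = _; rw [htb]; rfl)
    exact hmid

end ADJ

section Assembly
variable {A : Type*} [Ring A] [Algebra ℂ A]

theorem equiv_manin {N : ℕ} (g : ZMod 2 → Submodule ℂ A) (s : Fin N → ℤ)
    (M : Matrix (Fin N) (Fin N) (PowerSeries A)) (haff : IsAffine M)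
    (hM : IsManin (gPS g) s M) (ρ : Equiv.Perm (Fin N)) :
    IsAffine (M.submatrix ρ ρ) ∧ IsManin (gPS g) (fun i => s (ρ i)) (M.submatrix ρ ρ) := by
  refine ⟨?_, ⟨?_, ?_⟩⟩
  · intro i j
    rw [Matrix.submatrix_apply, haff]
    by_cases hij : i = j
    · subst hij; rw [if_pos rfl, if_pos rfl]
    · rw [if_neg hij, if_neg (fun hc => hij (ρ.injective hc))]
  · intro i j
    exact hM.1 (ρ i) (ρ j)
  · intro i j p q
    exact hM.2 (ρ i) (ρ j) (ρ p) (ρ q)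

theorem main_perm {N : ℕ} (g : ZMod 2 → Submodule ℂ A) (ρ : Equiv.Perm (Fin N)) :
    ∀ (s : Fin N → ℤ), IsParitySeq s →
      ∀ (M : Matrix (Fin N) (Fin N) (PowerSeries A)), IsAffine M → IsManin (gPS g) s M →
        berPar s M = berPar (fun i => s (ρ i)) (M.submatrix ρ ρ) := by
  rcases N with _ | N'
  · intro s hs M haff hM
    have : ρ = 1 := Subsingleton.elim _ _
    subst this
    rfl
  · -- generated by adjacent transpositions
    have hρ : ρ ∈ Submonoid.closure
        (Set.range fun i : Fin N' => Equiv.swap i.castSucc i.succ) := by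
      rw [Equiv.Perm.mclosure_swap_castSucc_succ]
      trivial
    induction hρ using Submonoid.closure_induction with
    | mem σ hσ =>
      obtain ⟨i, rfl⟩ := hσ
      intro s hs M haff hM
      dsimp only
      have hcs : i.castSucc = (⟨(i : ℕ), by omega⟩ : Fin (N' + 1)) := Fin.ext (by simp)
      have hsc : i.succ = (⟨(i : ℕ) + 1, by omega⟩ : Fin (N' + 1)) := Fin.ext (by simp)
      rw [hcs, hsc]
      exact adj g s hs M haff hM (i : ℕ) (by omega)
    | one =>
      intro s hs M haff hM
      simp only [Equiv.Perm.coe_one, Equiv.Perm.one_apply, Matrix.submatrix_id_id]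
    | mul σ₁ σ₂ h₁ h₂ ih₁ ih₂ =>
      intro s hs M haff hM
      have e1 := ih₁ s hs M haff hM
      obtain ⟨haff', hM'⟩ := equiv_manin g s M haff hM σ₁
      have e2 := ih₂ (fun i => s (σ₁ i)) (fun i => hs (σ₁ i)) (M.submatrix σ₁ σ₁) haff' hM'
      rw [e1, e2, Matrix.submatrix_submatrix]
      rfl

end Assembly

end S13

/-- **Statement 13.**  For an affine Manin matrix `A(w)` of parity `s` and `σ ∈ S_{m+n}`,
`Ber^s A(w) = Ber^{σ(s)} σ(A(w))`. -/
theorem statement13 (A : Type*) [Ring A] [Algebra ℂ A] (S : SuperAlg A) (m n : ℕ)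
    (s : Fin (m + n) → ℤ) (hs : IsParitySeq s)
    (hm : (Finset.univ.filter fun i => s i = 1).card = m)
    (M : Matrix (Fin (m + n)) (Fin (m + n)) (PowerSeries A))
    (haff : IsAffine M) (hM : IsManin (gPS S.g) s M)
    (σ : Equiv.Perm (Fin (m + n))) :
    berPar s M = berPar (fun i => s (σ⁻¹ i)) (M.submatrix ⇑σ⁻¹ ⇑σ⁻¹) := by
  have := S13.main_perm (A := A) S.g (σ⁻¹ : Equiv.Perm (Fin (m+n))) s hs M haff hM
  exact this
end
end
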